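/- arXiv:2505.01034 — 4 statements merged into one kernel-verified Lean document; each statement's English description precedes it below -/
import Mathlib

section
/- For every finite graph G on k ≥ 1 vertices and every integer n ≥ k, there exists a red/blue/purple colouring R ∪ B ∪ P of K_n such that: (1) the clique number of R ∪ P equals the clique number of G; (2) the clique number of B ∪ P equals the independence number α(R) of R, and α(R) ≤ ⌈n/k⌉ · α(G); (3) | |P| − e(G)·n²/k² | ≤ 3·e(G)·n/k; and (4) |R| ≤ e(G)·(n/k + 1), where e(G) is the number of edges of G. -/
/-- The independence number of a graph: the clique number of its complement. -/
noncomputable def indepNumber {V : Type*} (G : SimpleGraph V) : ℕ :=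
  Gᶜ.cliqueNum

/-- The Ramsey–Turán number `RT s x n`: the maximum number of edges of an `n`-vertex
`Kₛ`-free graph whose independence number is `< x`. -/
noncomputable def RT (s : ℕ) (x : ℝ) (n : ℕ) : ℕ :=
  sSup {m | ∃ G : SimpleGraph (Fin n),
    G.CliqueFree s ∧ (indepNumber G : ℝ) < x ∧ G.edgeSet.ncard = m}

/-- `R`, `B`, `P` form a red/blue/purple colouring of `K_n`: a partition of the
edge set of the complete graph into three graphs. -/
def IsRBP {n : ℕ} (R B P : SimpleGraph (Fin n)) : Prop :=
  R ⊔ B ⊔ P = ⊤ ∧ Disjoint R B ∧ Disjoint R P ∧ Disjoint B P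

/-- The colouring is `(s,t)`-free: `R ⊔ P` has no `s`-clique and `B ⊔ P` has no `t`-clique. -/
def IsSTFree {n : ℕ} (R B P : SimpleGraph (Fin n)) (s t : ℕ) : Prop :=
  (R ⊔ P).CliqueFree s ∧ (B ⊔ P).CliqueFree t

/-- The inverse Ramsey number: minimum independence number of an `n`-vertex `Kₛ`-free graph. -/
noncomputable def invRamsey (s n : ℕ) : ℕ :=
  sInf {a | ∃ G : SimpleGraph (Fin n), G.CliqueFree s ∧ indepNumber G = a}

/-- The Ramsey number `R(s,t)`. -/
noncomputable def ramseyNum (s t : ℕ) : ℕ :=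
  sInf {n | ∀ G : SimpleGraph (Fin n), ¬ G.CliqueFree s ∨ ¬ Gᶜ.CliqueFree t}

/-- The graph `P` is a matching: every vertex has at most one neighbour. -/
def IsMatchingGraph {n : ℕ} (P : SimpleGraph (Fin n)) : Prop :=
  ∀ v w w' : Fin n, P.Adj v w → P.Adj v w' → w = w'

open Finset

/-- cliqueNum is preserved by comap along a surjective map. -/
lemma cliqueNum_comap_surj {α β : Type*} [Fintype α] [Fintype β] (G : SimpleGraph β)
    (f : α → β) (hf : Function.Surjective f) : (G.comap f).cliqueNum = G.cliqueNum := by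
  classical
  apply le_antisymm
  · obtain ⟨s, hs⟩ := (G.comap f).exists_isNClique_cliqueNum
    have hinj : Set.InjOn f s := by
      intro v hv w hw hvw
      by_contra hne
      have h := hs.isClique hv hw hne
      rw [SimpleGraph.comap_adj, hvw] at h
      exact G.irrefl h
    have hcl : G.IsClique (s.image f) := by
      intro x hx y hy hxy
      rw [coe_image, Set.mem_image] at hx hy
      obtain ⟨v, hv, rfl⟩ := hx
      obtain ⟨w, hw, rfl⟩ := hy
      exact hs.isClique hv hw (fun h => hxy (by rw [h]))
    calc (G.comap f).cliqueNum = s.card := hs.card_eq.symm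
      _ = (s.image f).card := (Finset.card_image_of_injOn hinj).symm
      _ ≤ G.cliqueNum := SimpleGraph.IsClique.card_le_cliqueNum (tc := hcl)
  · obtain ⟨t, ht⟩ := G.exists_isNClique_cliqueNum
    obtain ⟨g, hg⟩ := hf.hasRightInverse
    have hinj : Set.InjOn g t := fun x _ y _ hxy => by
      rw [← hg x, ← hg y, hxy]
    have hcl : (G.comap f).IsClique (t.image g) := by
      intro x hx y hy hxy
      rw [coe_image, Set.mem_image] at hx hy
      obtain ⟨v, hv, rfl⟩ := hx
      obtain ⟨w, hw, rfl⟩ := hy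
      have hvw : v ≠ w := fun h => hxy (by rw [h])
      have := ht.isClique hv hw hvw
      rw [SimpleGraph.comap_adj, hg v, hg w]
      exact this
    calc G.cliqueNum = t.card := ht.card_eq.symm
      _ = (t.image g).card := (Finset.card_image_of_injOn hinj).symm
      _ ≤ (G.comap f).cliqueNum := SimpleGraph.IsClique.card_le_cliqueNum (tc := hcl)

lemma arith_purple (e r p q x : ℝ) (hq1 : 1 ≤ q) (hx1 : 1 ≤ x) (hxq : q ≤ x)
    (hxq2 : x ≤ q + 1) (he : 0 ≤ e) (hp : 0 ≤ p) (hr : 0 ≤ r)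
    (f1 : r ≤ e * (q + 1)) (f2 : r + p ≤ e * ((q + 1) * (q + 1)))
    (f3 : e * (q * q) ≤ r + p) : |p - e * x ^ 2| ≤ 3 * e * x := by
  rw [abs_le]
  constructor
  · nlinarith [mul_nonneg he (mul_nonneg (sub_nonneg.2 hq1) (sub_nonneg.2 hxq2)),
      mul_nonneg he (mul_nonneg (sub_nonneg.2 hxq) (sub_nonneg.2 hxq2))]
  · nlinarith [mul_nonneg he (sub_nonneg.2 hx1),
      mul_nonneg he (mul_nonneg (sub_nonneg.2 hxq) (show (0:ℝ) ≤ x + q + 2 by nlinarith))]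

lemma arith_red (e r q x : ℝ) (hxq : q ≤ x) (he : 0 ≤ e)
    (f1 : r ≤ e * (q + 1)) : r ≤ e * (x + 1) := by
  nlinarith [mul_nonneg he (sub_nonneg.2 hxq)]


theorem statement1 (k : ℕ) (hk : 1 ≤ k) (G : SimpleGraph (Fin k)) (n : ℕ) (hn : k ≤ n) :
    ∃ R B P : SimpleGraph (Fin n), IsRBP R B P ∧
      (R ⊔ P).cliqueNum = G.cliqueNum ∧
      (B ⊔ P).cliqueNum = indepNumber R ∧
      indepNumber R ≤ ⌈(n : ℝ) / k⌉₊ * indepNumber G ∧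
      |(P.edgeSet.ncard : ℝ) - (G.edgeSet.ncard : ℝ) * n ^ 2 / k ^ 2| ≤
        3 * (G.edgeSet.ncard : ℝ) * n / k ∧
      (R.edgeSet.ncard : ℝ) ≤ (G.edgeSet.ncard : ℝ) * ((n : ℝ) / k + 1) := by
  classical
  have hk0 : 0 < k := hk
  set q := n / k with hqdef
  have hq1 : 1 ≤ q := (Nat.one_le_div_iff hk0).2 hn
  let fm : Fin n → Fin k := fun v => ⟨(v : ℕ) % k, Nat.mod_lt _ hk0⟩
  have hfm_surj : Function.Surjective fm := by
    intro i
    refine ⟨⟨(i : ℕ), lt_of_lt_of_le i.isLt hn⟩, ?_⟩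
    simp only [fm]
    exact Fin.ext (Nat.mod_eq_of_lt i.isLt)
  have key : ∀ a b : Fin n, fm a = fm b → (a : ℕ) / k = (b : ℕ) / k → a = b := by
    intro a b h1 h2
    have h3 : (a : ℕ) % k = (b : ℕ) % k := congrArg Fin.val h1
    apply Fin.ext
    rw [← Nat.div_add_mod (a : ℕ) k, ← Nat.div_add_mod (b : ℕ) k, h2, h3]
  let R : SimpleGraph (Fin n) :=
    { Adj := fun v w => G.Adj (fm v) (fm w) ∧ (v : ℕ) / k = (w : ℕ) / k
      symm := ⟨fun v w h => ⟨h.1.symm, h.2.symm⟩⟩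
      loopless := ⟨fun v h => G.irrefl h.1⟩ }
  let P : SimpleGraph (Fin n) :=
    { Adj := fun v w => G.Adj (fm v) (fm w) ∧ (v : ℕ) / k ≠ (w : ℕ) / k
      symm := ⟨fun v w h => ⟨h.1.symm, h.2.symm⟩⟩
      loopless := ⟨fun v h => G.irrefl h.1⟩ }
  let B : SimpleGraph (Fin n) := (R ⊔ P)ᶜ
  have hRadj : ∀ v w, R.Adj v w ↔ G.Adj (fm v) (fm w) ∧ (v : ℕ) / k = (w : ℕ) / k :=
    fun v w => Iff.rfl
  have hPadj : ∀ v w, P.Adj v w ↔ G.Adj (fm v) (fm w) ∧ (v : ℕ) / k ≠ (w : ℕ) / k :=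
    fun v w => Iff.rfl
  have hRP : R ⊔ P = G.comap fm := by
    ext v w
    rw [SimpleGraph.sup_adj, SimpleGraph.comap_adj]
    constructor
    · rintro (⟨h, -⟩ | ⟨h, -⟩) <;> exact h
    · intro h
      rcases eq_or_ne ((v : ℕ) / k) ((w : ℕ) / k) with he | he
      · exact Or.inl ⟨h, he⟩
      · exact Or.inr ⟨h, he⟩
  have hBP : B ⊔ P = Rᶜ := by
    ext v w
    rw [SimpleGraph.sup_adj, SimpleGraph.compl_adj, SimpleGraph.compl_adj, SimpleGraph.sup_adj]
    constructor
    · rintro (⟨hne, hnadj⟩ | hp)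
      · exact ⟨hne, fun hr => hnadj (Or.inl hr)⟩
      · exact ⟨fun he => P.irrefl (he ▸ hp), fun hr => hp.2 hr.2⟩
    · rintro ⟨hne, hr⟩
      by_cases hp : P.Adj v w
      · exact Or.inr hp
      · exact Or.inl ⟨hne, fun h => h.elim hr hp⟩
  have hdisjRP : Disjoint R P := by
    rw [disjoint_iff]
    ext v w
    rw [SimpleGraph.inf_adj, SimpleGraph.bot_adj]
    constructor
    · rintro ⟨⟨-, h1⟩, ⟨-, h2⟩⟩; exact h2 h1
    · exact False.elim
  have hRBP : IsRBP R B P := by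
    refine ⟨?_, ?_, hdisjRP, ?_⟩
    · ext v w
      rw [SimpleGraph.sup_adj, SimpleGraph.sup_adj, SimpleGraph.top_adj]
      constructor
      · rintro ((h | h) | h)
        exacts [fun he => R.irrefl (he ▸ h), h.1, fun he => P.irrefl (he ▸ h)]
      · intro hne
        by_cases h : (R ⊔ P).Adj v w
        · rcases h with h | h
          exacts [Or.inl (Or.inl h), Or.inr h]
        · exact Or.inl (Or.inr ⟨hne, h⟩)
    · exact (disjoint_compl_right (a := R ⊔ P)).mono_left le_sup_left
    · exact ((disjoint_compl_right (a := R ⊔ P)).mono_left le_sup_right).symm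
  have hclique1 : (R ⊔ P).cliqueNum = G.cliqueNum := by
    rw [hRP]; exact cliqueNum_comap_surj G fm hfm_surj
  have hclique2 : (B ⊔ P).cliqueNum = indepNumber R := by
    rw [hBP]; rfl
  set L := ⌈(n : ℝ) / k⌉₊ with hLdef
  have hkR : (0:ℝ) < k := by exact_mod_cast hk0
  have hnL : n ≤ k * L := by
    have h := Nat.le_ceil ((n : ℝ) / k)
    rw [div_le_iff₀ hkR] at h
    have h2 : (n:ℝ) ≤ ((k * L : ℕ) : ℝ) := by push_cast; linarith
    exact_mod_cast h2
  have hindep : indepNumber R ≤ L * indepNumber G := by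
    obtain ⟨s, hs⟩ := (Rᶜ).exists_isNClique_cliqueNum
    have hcard : Rᶜ.cliqueNum = s.card := hs.card_eq.symm
    rw [indepNumber, hcard]
    have hmem : ∀ v ∈ s, (v : ℕ) / k ∈ Finset.range L := by
      intro v hv
      rw [Finset.mem_range, Nat.div_lt_iff_lt_mul hk0]
      calc (v:ℕ) < n := v.isLt
        _ ≤ k * L := hnL
        _ = L * k := mul_comm _ _
    rw [Finset.card_eq_sum_card_fiberwise hmem]
    have hfib : ∀ l ∈ Finset.range L,
        (s.filter fun v : Fin n => (v : ℕ) / k = l).card ≤ indepNumber G := by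
      intro l _
      set t := s.filter (fun v : Fin n => (v : ℕ) / k = l) with htdef
      have hmemt : ∀ a, a ∈ t → a ∈ s ∧ (a : ℕ) / k = l := by
        intro a ha
        rw [htdef, Finset.mem_filter] at ha
        exact ha
      have hinj : Set.InjOn fm t := by
        intro a ha b hb hab
        rw [mem_coe] at ha hb
        exact key a b hab ((hmemt a ha).2.trans (hmemt b hb).2.symm)
      have hcl : Gᶜ.IsClique (t.image fm) := by
        intro x hx y hy hxy
        rw [coe_image, Set.mem_image] at hx hy
        obtain ⟨a, ha, rfl⟩ := hx
        obtain ⟨b, hb, rfl⟩ := hy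
        rw [mem_coe] at ha hb
        have hab : a ≠ b := fun h => hxy (by rw [h])
        have hadj := hs.isClique (hmemt a ha).1 (hmemt b hb).1 hab
        rw [SimpleGraph.compl_adj] at hadj
        refine ⟨hxy, fun hG => hadj.2 ?_⟩
        exact ⟨hG, (hmemt a ha).2.trans (hmemt b hb).2.symm⟩
      calc t.card = (t.image fm).card := (Finset.card_image_of_injOn hinj).symm
        _ ≤ Gᶜ.cliqueNum := SimpleGraph.IsClique.card_le_cliqueNum (tc := hcl)
    calc ∑ l ∈ Finset.range L, (s.filter fun v : Fin n => (v : ℕ) / k = l).card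
        ≤ (Finset.range L).card * indepNumber G := by
          have := Finset.sum_le_card_nsmul (Finset.range L) _ _ hfib
          simpa using this
      _ = L * indepNumber G := by rw [Finset.card_range]
  -- edge counting
  have hprodcard : ∀ {α β : Type} (s : Set α) (t : Set β), s.Finite → t.Finite →
      (s ×ˢ t).ncard = s.ncard * t.ncard := by
    intro α β s t hs ht
    classical
    rw [Set.ncard_eq_toFinset_card _ (hs.prod ht), Set.ncard_eq_toFinset_card _ hs,
      Set.ncard_eq_toFinset_card _ ht, ← Finset.card_product]
    congr 1
    ext ⟨a, b⟩
    simp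
  have hpair : ∀ (m : ℕ) (H : SimpleGraph (Fin m)), 2 * H.edgeSet.ncard
      = {p : Fin m × Fin m | H.Adj p.1 p.2}.ncard := by
    intro m H
    classical
    have hset : {p : Fin m × Fin m | H.Adj p.1 p.2}
        = ↑(Finset.univ.filter fun (x, y) => H.Adj x y) := by
      ext ⟨x, y⟩
      simp
    rw [hset, Set.ncard_coe_finset, ← SimpleGraph.coe_edgeFinset H, Set.ncard_coe_finset,
      SimpleGraph.two_mul_card_edgeFinset H]
  set eN := G.edgeSet.ncard with heN
  set Rc := R.edgeSet.ncard with hRcdef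
  set Pc := P.edgeSet.ncard with hPcdef
  set pGs : Set (Fin k × Fin k) := {p | G.Adj p.1 p.2} with hpGs
  have hGpairs : pGs.ncard = 2 * eN := (hpair k G).symm
  have hBUadj : ∀ v w : Fin n, (R ⊔ P).Adj v w ↔ G.Adj (fm v) (fm w) := by
    intro v w
    rw [hRP, SimpleGraph.comap_adj]
  have hn0 : 0 < n := lt_of_lt_of_le hk0 hn
  have hlt : ∀ (i : Fin k) (a : ℕ), a < q → (i : ℕ) + k * a < n := by
    intro i a ha
    calc (i : ℕ) + k * a < k + k * a := Nat.add_lt_add_right i.isLt _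
      _ = k * (a + 1) := by ring
      _ ≤ k * q := Nat.mul_le_mul_left k ha
      _ = q * k := mul_comm _ _
      _ ≤ n := Nat.div_mul_le_self n k
  have hsum : Rc + Pc = (R ⊔ P).edgeSet.ncard := by
    rw [SimpleGraph.edgeSet_sup, Set.ncard_union_eq
      (SimpleGraph.disjoint_edgeSet.2 hdisjRP) (Set.toFinite _) (Set.toFinite _)]
  have hF1 : 2 * Rc ≤ 2 * eN * (q + 1) := by
    rw [hRcdef, hpair n R]
    have hle : (pGs ×ˢ (↑(Finset.range (q + 1)) : Set ℕ)).ncard = 2 * eN * (q + 1) := by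
      rw [hprodcard _ _ (Set.toFinite _) (Set.toFinite _), hGpairs, Set.ncard_coe_finset,
        Finset.card_range]
    rw [← hle]
    apply Set.ncard_le_ncard_of_injOn (fun p => ((fm p.1, fm p.2), (p.1 : ℕ) / k))
    · rintro ⟨v, w⟩ hp
      have hadj : R.Adj v w := hp
      refine ⟨hadj.1, ?_⟩
      rw [Finset.mem_coe, Finset.mem_range]
      exact Nat.lt_succ_of_le (Nat.div_le_div_right (le_of_lt v.isLt))
    · rintro ⟨v, w⟩ hvw ⟨v', w'⟩ hvw' heq
      have hadj : R.Adj v w := hvw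
      have hadj' : R.Adj v' w' := hvw'
      simp only [Prod.mk.injEq] at heq
      obtain ⟨⟨h1, h2⟩, h3⟩ := heq
      have hv : v = v' := key v v' h1 h3
      have hw : w = w' := key w w' h2 (by rw [← hadj.2, ← hadj'.2, h3])
      rw [hv, hw]
  have hF2 : 2 * (Rc + Pc) ≤ 2 * eN * ((q + 1) * (q + 1)) := by
    rw [hsum, hpair n (R ⊔ P)]
    have hle : (pGs ×ˢ ((↑(Finset.range (q + 1)) : Set ℕ) ×ˢ (↑(Finset.range (q + 1)) : Set ℕ))).ncard
        = 2 * eN * ((q + 1) * (q + 1)) := by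
      rw [hprodcard _ _ (Set.toFinite _) (Set.toFinite _),
        hprodcard _ _ (Set.toFinite _) (Set.toFinite _), hGpairs,
        Set.ncard_coe_finset, Finset.card_range]
    rw [← hle]
    apply Set.ncard_le_ncard_of_injOn
      (fun p => ((fm p.1, fm p.2), ((p.1 : ℕ) / k, (p.2 : ℕ) / k)))
    · rintro ⟨v, w⟩ hp
      have hadj : G.Adj (fm v) (fm w) := (hBUadj v w).1 hp
      refine ⟨hadj, ?_, ?_⟩ <;> rw [Finset.mem_coe, Finset.mem_range]
      · exact Nat.lt_succ_of_le (Nat.div_le_div_right (le_of_lt v.isLt))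
      · exact Nat.lt_succ_of_le (Nat.div_le_div_right (le_of_lt w.isLt))
    · rintro ⟨v, w⟩ hvw ⟨v', w'⟩ hvw' heq
      simp only [Prod.mk.injEq] at heq
      obtain ⟨⟨h1, h2⟩, h3, h4⟩ := heq
      rw [key v v' h1 h3, key w w' h2 h4]
  have hF3 : 2 * eN * (q * q) ≤ 2 * (Rc + Pc) := by
    rw [hsum, hpair n (R ⊔ P)]
    have hle : (pGs ×ˢ ((↑(Finset.range q) : Set ℕ) ×ˢ (↑(Finset.range q) : Set ℕ))).ncard
        = 2 * eN * (q * q) := by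
      rw [hprodcard _ _ (Set.toFinite _) (Set.toFinite _),
        hprodcard _ _ (Set.toFinite _) (Set.toFinite _), hGpairs,
        Set.ncard_coe_finset, Finset.card_range]
    rw [← hle]
    apply Set.ncard_le_ncard_of_injOn
      (fun p => ((⟨((p.1.1 : ℕ) + k * p.2.1) % n, Nat.mod_lt _ hn0⟩ : Fin n),
                 (⟨((p.1.2 : ℕ) + k * p.2.2) % n, Nat.mod_lt _ hn0⟩ : Fin n)))
    · rintro ⟨⟨i, j⟩, a, b⟩ hp
      obtain ⟨hadj, ha', hb'⟩ := hp
      rw [Finset.mem_coe, Finset.mem_range] at ha' hb'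
      have hadj : G.Adj i j := hadj
      have ha : a < q := ha'
      have hb : b < q := hb'
      show (R ⊔ P).Adj _ _
      apply (hBUadj _ _).2
      have e1 : ((i : ℕ) + k * a) % n = (i : ℕ) + k * a := Nat.mod_eq_of_lt (hlt i a ha)
      have e2 : ((j : ℕ) + k * b) % n = (j : ℕ) + k * b := Nat.mod_eq_of_lt (hlt j b hb)
      have efm1 : fm (⟨((i : ℕ) + k * a) % n, Nat.mod_lt _ hn0⟩ : Fin n) = i := by
        apply Fin.ext
        show (((i : ℕ) + k * a) % n) % k = (i : ℕ)
        rw [e1, Nat.add_mul_mod_self_left, Nat.mod_eq_of_lt i.isLt]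
      have efm2 : fm (⟨((j : ℕ) + k * b) % n, Nat.mod_lt _ hn0⟩ : Fin n) = j := by
        apply Fin.ext
        show (((j : ℕ) + k * b) % n) % k = (j : ℕ)
        rw [e2, Nat.add_mul_mod_self_left, Nat.mod_eq_of_lt j.isLt]
      rw [efm1, efm2]
      exact hadj
    · rintro ⟨⟨i, j⟩, a, b⟩ hp ⟨⟨i', j'⟩, a', b'⟩ hp' heq
      obtain ⟨-, ha0, hb0⟩ := hp
      obtain ⟨-, ha0', hb0'⟩ := hp'
      rw [Finset.mem_coe, Finset.mem_range] at ha0 hb0 ha0' hb0'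
      have ha : a < q := ha0
      have hb : b < q := hb0
      have ha' : a' < q := ha0'
      have hb' : b' < q := hb0'
      simp only [Prod.mk.injEq, Fin.mk.injEq] at heq
      obtain ⟨hij, hab⟩ := heq
      have e1 : (i : ℕ) + k * a = (i' : ℕ) + k * a' := by
        rw [← Nat.mod_eq_of_lt (hlt i a ha), ← Nat.mod_eq_of_lt (hlt i' a' ha'), hij]
      have e2 : (j : ℕ) + k * b = (j' : ℕ) + k * b' := by
        rw [← Nat.mod_eq_of_lt (hlt j b hb), ← Nat.mod_eq_of_lt (hlt j' b' hb'), hab]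
      have hi : i = i' := by
        apply Fin.ext
        rw [← Nat.mod_eq_of_lt i.isLt, ← Nat.mod_eq_of_lt i'.isLt,
          ← Nat.add_mul_mod_self_left (i : ℕ) k a, ← Nat.add_mul_mod_self_left (i' : ℕ) k a', e1]
      have hj : j = j' := by
        apply Fin.ext
        rw [← Nat.mod_eq_of_lt j.isLt, ← Nat.mod_eq_of_lt j'.isLt,
          ← Nat.add_mul_mod_self_left (j : ℕ) k b, ← Nat.add_mul_mod_self_left (j' : ℕ) k b', e2]
      have hA : a = a' := by
        have := congrArg (fun m => m / k) e1
        simpa [Nat.add_mul_div_left _ _ hk0, Nat.div_eq_of_lt i.isLt,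
          Nat.div_eq_of_lt i'.isLt] using this
      have hB : b = b' := by
        have := congrArg (fun m => m / k) e2
        simpa [Nat.add_mul_div_left _ _ hk0, Nat.div_eq_of_lt j.isLt,
          Nat.div_eq_of_lt j'.isLt] using this
      simp [hi, hj, hA, hB]
  -- real arithmetic
  have heN0 : (0:ℝ) ≤ (eN:ℝ) := Nat.cast_nonneg _
  have hmod : (n:ℝ) = k * q + ((n % k : ℕ) : ℝ) := by
    exact_mod_cast (Nat.div_add_mod n k).symm
  have hmodlt : ((n % k : ℕ) : ℝ) < k := by exact_mod_cast Nat.mod_lt n hk0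
  set x : ℝ := (n:ℝ) / k with hxdef
  have hx1 : (1:ℝ) ≤ x := by
    rw [hxdef, le_div_iff₀ hkR, one_mul]
    exact_mod_cast hn
  have hxq : (q:ℝ) ≤ x := by
    rw [hxdef, le_div_iff₀ hkR]
    exact_mod_cast Nat.div_mul_le_self n k
  have hxq2 : x ≤ (q:ℝ) + 1 := by
    rw [hxdef, div_le_iff₀ hkR]
    nlinarith [hmod, hmodlt]
  have hq1R : (1:ℝ) ≤ (q:ℝ) := by exact_mod_cast hq1
  have f1 : (Rc:ℝ) ≤ eN * ((q:ℝ) + 1) := by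
    have h : (2:ℝ) * Rc ≤ 2 * eN * ((q:ℝ) + 1) := by exact_mod_cast hF1
    linarith
  have f2 : (Rc:ℝ) + Pc ≤ eN * (((q:ℝ) + 1) * ((q:ℝ) + 1)) := by
    have h : (2:ℝ) * ((Rc:ℝ) + Pc) ≤ 2 * eN * (((q:ℝ) + 1) * ((q:ℝ) + 1)) := by
      exact_mod_cast hF2
    linarith
  have f3 : (eN:ℝ) * ((q:ℝ) * (q:ℝ)) ≤ (Rc:ℝ) + Pc := by
    have h : (2:ℝ) * eN * ((q:ℝ) * (q:ℝ)) ≤ 2 * ((Rc:ℝ) + Pc) := by exact_mod_cast hF3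
    linarith
  have hPc0 : (0:ℝ) ≤ (Pc:ℝ) := Nat.cast_nonneg _
  have hRc0 : (0:ℝ) ≤ (Rc:ℝ) := Nat.cast_nonneg _
  refine ⟨R, B, P, hRBP, hclique1, hclique2, hindep, ?_, ?_⟩
  · rw [← hPcdef]
    have hnk2 : (eN:ℝ) * (n:ℝ) ^ 2 / (k:ℝ) ^ 2 = eN * x ^ 2 := by
      rw [hxdef, div_pow, mul_div_assoc]
    have hnk1 : 3 * (eN:ℝ) * n / k = 3 * eN * x := by rw [hxdef, mul_div_assoc]
    rw [hnk2, hnk1]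
    exact arith_purple (eN:ℝ) (Rc:ℝ) (Pc:ℝ) (q:ℝ) x hq1R hx1 hxq hxq2 heN0 hPc0 hRc0 f1 f2 f3
  · rw [← hRcdef]
    exact arith_red (eN:ℝ) (Rc:ℝ) (q:ℝ) x hxq heN0 f1
end

section
/- For every integer s ≥ 3 and every real c > 1/(s−1), there exist a constant C > 0 and n₀ such that for all n ≥ n₀ there exists an (s,⌈cn⌉)-free red/blue/purple colouring R ∪ B ∪ P of K_n with |P| ≥ RT(s,⌈cn⌉,n) − C·n. -/
open SimpleGraph Finset

private lemma aux_div_mod_eq {r a b : ℕ} (h1 : a / r = b / r) (h2 : a % r = b % r) :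
    a = b := by
  conv_lhs => rw [← Nat.div_add_mod a r]
  rw [h1, h2, Nat.div_add_mod]

/-- Red graph: same quotient mod `r`. -/
def Rg (n r : ℕ) : SimpleGraph (Fin n) where
  Adj v w := v ≠ w ∧ (v : ℕ) / r = (w : ℕ) / r
  symm := ⟨fun v w h => ⟨h.1.symm, h.2.symm⟩⟩
  loopless := ⟨fun v h => h.1 rfl⟩

/-- Blue graph: same residue mod `r`. -/
def Bg (n r : ℕ) : SimpleGraph (Fin n) where
  Adj v w := v ≠ w ∧ (v : ℕ) % r = (w : ℕ) % r
  symm := ⟨fun v w h => ⟨h.1.symm, h.2.symm⟩⟩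
  loopless := ⟨fun v h => h.1 rfl⟩

/-- Purple graph: different quotient and different residue mod `r`. -/
def Pg (n r : ℕ) : SimpleGraph (Fin n) where
  Adj v w := (v : ℕ) / r ≠ (w : ℕ) / r ∧ (v : ℕ) % r ≠ (w : ℕ) % r
  symm := ⟨fun v w h => ⟨h.1.symm, h.2.symm⟩⟩
  loopless := ⟨fun v h => h.1 rfl⟩

@[simp] lemma Rg_adj {n r : ℕ} {v w : Fin n} :
    (Rg n r).Adj v w ↔ v ≠ w ∧ (v : ℕ) / r = (w : ℕ) / r := Iff.rfl
@[simp] lemma Bg_adj {n r : ℕ} {v w : Fin n} :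
    (Bg n r).Adj v w ↔ v ≠ w ∧ (v : ℕ) % r = (w : ℕ) % r := Iff.rfl
@[simp] lemma Pg_adj {n r : ℕ} {v w : Fin n} :
    (Pg n r).Adj v w ↔ (v : ℕ) / r ≠ (w : ℕ) / r ∧ (v : ℕ) % r ≠ (w : ℕ) % r := Iff.rfl

instance {n r : ℕ} : DecidableRel (Rg n r).Adj := fun v w => by
  dsimp only [Rg]; infer_instance

lemma turan_adj {n r : ℕ} {v w : Fin n} :
    (turanGraph n r).Adj v w ↔ (v : ℕ) % r ≠ (w : ℕ) % r := by
  constructor <;> intro h <;> simp_all [turanGraph]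

lemma RP_eq_turan (n r : ℕ) : Rg n r ⊔ Pg n r = turanGraph n r := by
  ext v w
  rw [sup_adj, turan_adj, Rg_adj, Pg_adj]
  constructor
  · rintro (⟨hne, hd⟩ | ⟨hd, hm⟩)
    · exact fun hm => hne (Fin.val_injective (aux_div_mod_eq hd hm))
    · exact hm
  · intro hm
    have hne : v ≠ w := fun he => hm (by rw [he])
    by_cases hd : (v : ℕ) / r = (w : ℕ) / r
    · exact Or.inl ⟨hne, hd⟩
    · exact Or.inr ⟨hd, hm⟩

lemma cliqueFree_of_map {n K t : ℕ} (G : SimpleGraph (Fin n)) (f : Fin n → Fin K)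
    (h : ∀ v w, G.Adj v w → f v ≠ f w) (ht : K < t) : G.CliqueFree t := by
  rw [cliqueFree_iff]
  by_contra hcon
  rw [not_isEmpty_iff] at hcon
  obtain ⟨e⟩ := hcon
  obtain ⟨x, y, hxy, hfe⟩ := Fintype.exists_ne_map_eq_of_card_lt
    (fun x : Fin t => f (e x)) (by simpa)
  exact h _ _ (e.toHom.map_adj (by simp [hxy])) hfe

lemma Rg_degree_le (n r : ℕ) (hr : 0 < r) (v : Fin n) : (Rg n r).degree v ≤ r := by
  classical
  rw [← card_neighborFinset_eq_degree]
  have hsub : (Rg n r).neighborFinset v ⊆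
      Finset.univ.filter (fun w : Fin n => (w : ℕ) / r = (v : ℕ) / r) := by
    intro w hw
    rw [mem_neighborFinset] at hw
    simp [hw.2.symm]
  have hcard : #(Finset.univ.filter (fun w : Fin n => (w : ℕ) / r = (v : ℕ) / r))
      ≤ #(Finset.range r) := by
    refine Finset.card_le_card_of_injOn (fun w => (w : ℕ) % r)
      (fun a _ => by simpa [Finset.mem_range] using Nat.mod_lt _ hr)
      (fun a ha b hb hab => ?_)
    simp only [Finset.mem_coe, Finset.mem_filter] at ha hb
    exact Fin.val_injective (aux_div_mod_eq (ha.2.trans hb.2.symm) hab)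
  calc #((Rg n r).neighborFinset v) ≤ _ := Finset.card_le_card hsub
    _ ≤ #(Finset.range r) := hcard
    _ = r := Finset.card_range r

lemma Rg_edges_le (n r : ℕ) (hr : 0 < r) : (Rg n r).edgeSet.ncard ≤ n * r := by
  classical
  have h2 : ∑ v : Fin n, (Rg n r).degree v = 2 * #(Rg n r).edgeFinset :=
    sum_degrees_eq_twice_card_edges _
  have h3 : ∑ v : Fin n, (Rg n r).degree v ≤ n * r := by
    calc ∑ v : Fin n, (Rg n r).degree v ≤ ∑ _v : Fin n, r :=
          Finset.sum_le_sum fun v _ => Rg_degree_le n r hr v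
      _ = n * r := by simp [mul_comm]
  have h4 : (Rg n r).edgeSet.ncard = #(Rg n r).edgeFinset := by
    rw [← coe_edgeFinset, Set.ncard_coe_finset]
  omega

theorem statement3 (s : ℕ) (hs : 3 ≤ s) (c : ℝ) (hc : 1 / ((s : ℝ) - 1) < c) :
    ∃ C : ℝ, 0 < C ∧ ∃ n₀ : ℕ, ∀ n : ℕ, n₀ ≤ n →
      ∃ R B P : SimpleGraph (Fin n), IsRBP R B P ∧
        IsSTFree R B P s ⌈c * (n : ℝ)⌉₊ ∧
        (RT s (⌈c * (n : ℝ)⌉₊ : ℝ) n : ℝ) - C * n ≤ (P.edgeSet.ncard : ℝ) := by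
  classical
  obtain ⟨r, hrdef⟩ : ∃ r : ℕ, r = s - 1 := ⟨s - 1, rfl⟩
  have hr : 0 < r := by omega
  have hr1 : r + 1 = s := by omega
  have hrR : ((r : ℕ) : ℝ) = (s : ℝ) - 1 := by
    rw [hrdef, Nat.cast_sub (by omega)]; norm_num
  have hrpos : (0 : ℝ) < (r : ℝ) := by exact_mod_cast hr
  obtain ⟨ε, hε⟩ : ∃ ε : ℝ, ε = c - 1 / (r : ℝ) := ⟨_, rfl⟩
  have hεpos : 0 < ε := by rw [hε, hrR]; linarith
  refine ⟨(s : ℝ), by exact_mod_cast (by omega : 0 < s), ⌈2 / ε⌉₊ + 1, fun n hn => ?_⟩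
  have hn1 : 1 ≤ n := by omega
  refine ⟨Rg n r, Bg n r, Pg n r, ?_, ?_, ?_⟩
  · -- IsRBP
    refine ⟨?_, ?_, ?_, ?_⟩
    · ext v w
      simp only [sup_adj, top_adj, Rg_adj, Bg_adj, Pg_adj]
      constructor
      · rintro ((⟨h, _⟩ | ⟨h, _⟩) | ⟨h1, _⟩)
        · exact h
        · exact h
        · exact fun he => h1 (by rw [he])
      · intro hne
        by_cases hd : (v : ℕ) / r = (w : ℕ) / r
        · exact Or.inl (Or.inl ⟨hne, hd⟩)
        · by_cases hm : (v : ℕ) % r = (w : ℕ) % r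
          · exact Or.inl (Or.inr ⟨hne, hm⟩)
          · exact Or.inr ⟨hd, hm⟩
    · rw [disjoint_iff]
      ext v w
      simp only [inf_adj, bot_adj, Rg_adj, Bg_adj, iff_false]
      rintro ⟨⟨hne, hd⟩, -, hm⟩
      exact hne (Fin.val_injective (aux_div_mod_eq hd hm))
    · rw [disjoint_iff]
      ext v w
      simp only [inf_adj, bot_adj, Rg_adj, Pg_adj, iff_false]
      rintro ⟨⟨-, hd⟩, hd', -⟩
      exact hd' hd
    · rw [disjoint_iff]
      ext v w
      simp only [inf_adj, bot_adj, Bg_adj, Pg_adj, iff_false]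
      rintro ⟨⟨-, hm⟩, -, hm'⟩
      exact hm' hm
  · -- IsSTFree
    constructor
    · rw [RP_eq_turan]
      exact hr1 ▸ turanGraph_cliqueFree hr
    · -- B ⊔ P is K_t free with t = ⌈c n⌉
      have hnum : (n - 1) / r + 1 < ⌈c * (n : ℝ)⌉₊ := by
        have hceil : (2 : ℝ) / ε ≤ (⌈2 / ε⌉₊ : ℝ) := Nat.le_ceil _
        have hnn : ((⌈2 / ε⌉₊ : ℕ) : ℝ) ≤ (n : ℝ) := by exact_mod_cast (by omega : ⌈2/ε⌉₊ ≤ n)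
        have h2e : 2 ≤ ε * n := by
          rw [div_le_iff₀ hεpos] at hceil
          nlinarith [mul_le_mul_of_nonneg_right hnn hεpos.le]
        have key : (((n - 1) / r + 2 : ℕ) : ℝ) ≤ c * n := by
          push_cast
          have h1 : (((n - 1) / r : ℕ) : ℝ) ≤ ((n - 1 : ℕ) : ℝ) / (r : ℝ) := Nat.cast_div_le
          have h2 : ((n - 1 : ℕ) : ℝ) ≤ (n : ℝ) := by exact_mod_cast (by omega : n - 1 ≤ n)
          have h3 : ((n - 1 : ℕ) : ℝ) / (r : ℝ) ≤ (n : ℝ) / (r : ℝ) := by gcongr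
          have hcn : ε * n + (n : ℝ) / (r : ℝ) = c * n := by
            rw [hε]; field_simp; ring
          linarith [h1, h3, h2e, hcn]
        have := (key.trans (Nat.le_ceil (c * (n : ℝ))))
        exact_mod_cast (by exact_mod_cast this : (n - 1) / r + 2 ≤ ⌈c * (n : ℝ)⌉₊)
      apply cliqueFree_of_map _ (fun v : Fin n =>
        (⟨(v : ℕ) / r, Nat.lt_succ_of_le (Nat.div_le_div_right (by omega))⟩ :
          Fin ((n - 1) / r + 1)))
      · intro v w hvw hf
        have hdiv : (v : ℕ) / r ≠ (w : ℕ) / r := by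
          rcases hvw with h | h
          · rcases h with ⟨hne, hm⟩
            exact fun hd => hne (Fin.val_injective (aux_div_mod_eq hd hm))
          · exact h.1
        exact hdiv (by simpa using congrArg Fin.val hf)
      · exact hnum
  · -- edge count
    have hT : RT s ((⌈c * (n : ℝ)⌉₊ : ℕ) : ℝ) n ≤ (turanGraph n r).edgeSet.ncard := by
      apply csSup_le'
      rintro m ⟨G, hG1, -, hG3⟩
      letI : DecidableRel G.Adj := Classical.decRel _
      have hle := (isTuranMaximal_turanGraph (n := n) hr).2 (G' := G) (hr1 ▸ hG1)
      have e1 : G.edgeSet.ncard = #G.edgeFinset := by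
        rw [← coe_edgeFinset, Set.ncard_coe_finset]
      have e2 : (turanGraph n r).edgeSet.ncard = #(turanGraph n r).edgeFinset := by
        rw [← coe_edgeFinset, Set.ncard_coe_finset]
      omega
    have hsplit : (turanGraph n r).edgeSet.ncard ≤
        (Pg n r).edgeSet.ncard + (Rg n r).edgeSet.ncard := by
      rw [← RP_eq_turan n r, edgeSet_sup]
      calc ((Rg n r).edgeSet ∪ (Pg n r).edgeSet).ncard
          ≤ (Rg n r).edgeSet.ncard + (Pg n r).edgeSet.ncard := Set.ncard_union_le _ _
        _ = _ := by omega
    have hR : (Rg n r).edgeSet.ncard ≤ n * s :=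
      (Rg_edges_le n r hr).trans (Nat.mul_le_mul_left n (by omega))
    have hfinal : RT s ((⌈c * (n : ℝ)⌉₊ : ℕ) : ℝ) n ≤ (Pg n r).edgeSet.ncard + n * s := by
      omega
    have : (RT s ((⌈c * (n : ℝ)⌉₊ : ℕ) : ℝ) n : ℝ) ≤ ((Pg n r).edgeSet.ncard : ℝ) + n * s := by
      exact_mod_cast hfinal
    linarith
end

section
/- For every real c with 1/3 < c < 1/2 there exist a constant C > 0 and n₀ such that for all n ≥ n₀ the following holds: set t = ⌈cn⌉ and let k be the unique integer satisfying k·n/(3k−1) ≤ t < (k−1)·n/(3k−4); then there exists a (3,t+1)-free red/blue/purple colouring R ∪ B ∪ P of K_n with |P| ≥ (1/2)·k(k−1)·n² − k(3k−4)·t·n + (1/2)·(3k−4)(3k−1)·t² − C·n. -/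
namespace RTAux


/-- circular distance in `ZMod Q` represented on naturals. -/
def cdm (Q a b : ℕ) : ℕ := min ((a + Q - b) % Q) ((b + Q - a) % Q)

lemma cdm_comm (Q a b : ℕ) : cdm Q a b = cdm Q b a := by
  unfold cdm; exact Nat.min_comm _ _

lemma cdm_self (Q a : ℕ) : cdm Q a a = 0 := by
  unfold cdm
  have : a + Q - a = Q := by omega
  simp [this]

lemma cdm_eq (Q a b : ℕ) (ha : a < Q) (hb : b < Q) :
    cdm Q a b = if a ≤ b then min (b - a) (Q - (b - a)) else min (a - b) (Q - (a - b)) := by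
  unfold cdm
  by_cases hab : a ≤ b
  · rw [if_pos hab]
    have e1 : a + Q - b = Q - (b - a) := by omega
    have e2 : b + Q - a = Q + (b - a) := by omega
    rw [e1, e2, Nat.add_mod_left, Nat.mod_eq_of_lt (by omega : b - a < Q)]
    rcases Nat.eq_zero_or_pos (b - a) with h0 | h0
    · rw [h0]; simp [Nat.mod_self]
    · rw [Nat.mod_eq_of_lt (by omega : Q - (b - a) < Q)]; omega
  · rw [if_neg hab]
    have e1 : b + Q - a = Q - (a - b) := by omega
    have e2 : a + Q - b = Q + (a - b) := by omega
    rw [e1, e2, Nat.add_mod_left, Nat.mod_eq_of_lt (by omega : a - b < Q)]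
    rw [Nat.mod_eq_of_lt (by omega : Q - (a - b) < Q)]

/-- Arc lemma: a set of residues `< Q` with pairwise circular distance `≤ m-1`
has at most `m` elements (when `Q ≥ 3m-2`). -/
lemma arc_card (Q m : ℕ) (hm : 1 ≤ m) (hQ : 3 * m - 2 ≤ Q) (T : Finset ℕ)
    (hT : ∀ x ∈ T, x < Q)
    (hp : ∀ x ∈ T, ∀ y ∈ T, cdm Q x y ≤ m - 1) : T.card ≤ m := by
  rcases T.eq_empty_or_nonempty with rfl | ⟨m0, hm0⟩
  · simp
  have hm0Q : m0 < Q := hT m0 hm0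
  set δ : ℕ → ℕ := fun x => if m0 ≤ x then x - m0 else x + Q - m0 with hδ
  have hδlt : ∀ x ∈ T, δ x < Q := by
    intro x hx; have := hT x hx; simp only [hδ]; split_ifs <;> omega
  have hside : ∀ x ∈ T, δ x ≤ m - 1 ∨ Q - (m - 1) ≤ δ x := by
    intro x hx
    have h := hp x hx m0 hm0
    rw [cdm_eq Q x m0 (hT x hx) hm0Q] at h
    simp only [hδ]; split_ifs at h ⊢ <;> omega
  have hpair : ∀ x ∈ T, ∀ y ∈ T, δ x ≤ m - 1 → Q - (m - 1) ≤ δ y →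
      δ x + (Q - δ y) ≤ m - 1 := by
    intro x hx y hy hx1 hy1
    have h := hp x hx y hy
    rw [cdm_eq Q x y (hT x hx) (hT y hy)] at h
    have hxQ := hT x hx; have hyQ := hT y hy
    simp only [hδ] at hx1 hy1 ⊢
    split_ifs at hx1 hy1 ⊢ <;> split_ifs at h <;> omega
  classical
  set Dset := T.filter (fun x => Q - (m - 1) ≤ δ x) with hDset
  set D := Dset.sup (fun x => Q - δ x) with hD
  have hDle : D ≤ m - 1 := by
    apply Finset.sup_le
    intro y hy
    rw [hDset, Finset.mem_filter] at hy
    omega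
  have hDbound : ∀ x ∈ T, δ x ≤ m - 1 → δ x + D ≤ m - 1 := by
    intro x hx hx1
    rcases Dset.eq_empty_or_nonempty with he | ⟨y, hy⟩
    · rw [hD, he]; simpa using hx1
    · have : D ≤ m - 1 - δ x := by
        apply Finset.sup_le
        intro z hz
        rw [hDset, Finset.mem_filter] at hz
        have := hpair x hx z hz.1 hx1 hz.2
        omega
      omega
  set ψ : ℕ → ℕ := fun x => if Q - (m - 1) ≤ δ x then D - (Q - δ x) else δ x + D with hψ
  have hmaps : ∀ x ∈ T, ψ x ∈ Finset.range m := by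
    intro x hx
    rw [Finset.mem_range]
    simp only [hψ]
    split_ifs with h
    · omega
    · have := hside x hx
      have := hDbound x hx (by omega)
      omega
  have hinj : ∀ x ∈ T, ∀ y ∈ T, ψ x = ψ y → x = y := by
    intro x hx y hy hxy
    have hxQ := hT x hx; have hyQ := hT y hy
    have hδx := hδlt x hx; have hδy := hδlt y hy
    have hDx : x ∈ Dset → Q - δ x ≤ D := fun h => Finset.le_sup (f := fun x => Q - δ x) h
    have hDy : y ∈ Dset → Q - δ y ≤ D := fun h => Finset.le_sup (f := fun x => Q - δ x) h
    have hδinj : δ x = δ y → x = y := by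
      simp only [hδ]; split_ifs <;> omega
    simp only [hψ] at hxy
    split_ifs at hxy with h1 h2 h2
    · have d1 := hDx (by rw [hDset, Finset.mem_filter]; exact ⟨hx, h1⟩)
      have d2 := hDy (by rw [hDset, Finset.mem_filter]; exact ⟨hy, h2⟩)
      exact hδinj (by omega)
    · -- x minus side, y plus side
      have := hside y hy
      have := hDbound y hy (by omega)
      have d1 := hDx (by rw [hDset, Finset.mem_filter]; exact ⟨hx, h1⟩)
      omega
    · have := hside x hx
      have := hDbound x hx (by omega)
      have d2 := hDy (by rw [hDset, Finset.mem_filter]; exact ⟨hy, h2⟩)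
      omega
    · exact hδinj (by omega)
  calc T.card ≤ (Finset.range m).card := Finset.card_le_card_of_injOn ψ hmaps hinj
  _ = m := Finset.card_range m


/-- embedding of `ZMod (3k-4)` into the non-special residues of `ZMod (3k-1)`,
where the special residues are `0`, `k`, `2k`. -/
def emb (k u : ℕ) : ℕ := if u < k - 1 then u + 1 else if u < 2 * k - 2 then u + 2 else u + 3

lemma emb_lt (k u : ℕ) (hk : 2 ≤ k) (hu : u < 3 * k - 4) : emb k u < 3 * k - 1 := by
  unfold emb; split_ifs <;> omega

lemma emb_ne (k u : ℕ) (hk : 2 ≤ k) (hu : u < 3 * k - 4) :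
    emb k u ≠ 0 ∧ emb k u ≠ k ∧ emb k u ≠ 2 * k := by
  unfold emb; split_ifs <;> omega

lemma emb_inj (k u v : ℕ) (hk : 2 ≤ k) (hu : u < 3 * k - 4) (hv : v < 3 * k - 4)
    (h : emb k u = emb k v) : u = v := by
  unfold emb at h; split_ifs at h <;> omega

lemma emb_image (k : ℕ) (hk : 2 ≤ k) :
    (Finset.range (3 * k - 4)).image (emb k) =
      (Finset.range (3 * k - 1)).filter (fun j => j ≠ 0 ∧ j ≠ k ∧ j ≠ 2 * k) := by
  ext j
  simp only [Finset.mem_image, Finset.mem_filter, Finset.mem_range]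
  constructor
  · rintro ⟨u, hu, rfl⟩
    refine ⟨emb_lt k u hk hu, emb_ne k u hk hu⟩
  · rintro ⟨hj, h0, hks, h2k⟩
    by_cases h1 : j < k
    · exact ⟨j - 1, by omega, by unfold emb; split_ifs <;> omega⟩
    by_cases h2 : j < 2 * k
    · exact ⟨j - 2, by omega, by unfold emb; split_ifs <;> omega⟩
    · exact ⟨j - 3, by omega, by unfold emb; split_ifs <;> omega⟩

/-- contraction: small circular distance upstairs gives small distance downstairs. -/
lemma cdm_emb (k u v : ℕ) (hk : 2 ≤ k) (hu : u < 3 * k - 4) (hv : v < 3 * k - 4)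
    (h : cdm (3 * k - 1) (emb k u) (emb k v) ≤ k - 1) :
    cdm (3 * k - 4) u v ≤ k - 2 := by
  rw [cdm_eq _ _ _ (emb_lt k u hk hu) (emb_lt k v hk hv)] at h
  rw [cdm_eq _ _ _ hu hv]
  unfold emb at h
  split_ifs at h <;> split_ifs <;> omega

/-- no three residues pairwise at circular distance `≥ k` in `ZMod (3k-1)`. -/
lemma no_triangle (k a b c : ℕ) (hk : 2 ≤ k) (ha : a < 3 * k - 1) (hb : b < 3 * k - 1)
    (hc : c < 3 * k - 1) (hab : k ≤ cdm (3 * k - 1) a b) (hbc : k ≤ cdm (3 * k - 1) b c)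
    (hac : k ≤ cdm (3 * k - 1) a c) : False := by
  rw [cdm_eq _ _ _ ha hb] at hab
  rw [cdm_eq _ _ _ hb hc] at hbc
  rw [cdm_eq _ _ _ ha hc] at hac
  split_ifs at hab hbc hac <;> omega


open Finset

lemma card_filter_fin (n : ℕ) (p : ℕ → Prop) [DecidablePred p] :
    (Finset.univ.filter (fun v : Fin n => p v.val)).card = ((Finset.range n).filter p).card := by
  apply Finset.card_bij (fun v _ => v.val)
  · intro a ha; simp only [mem_filter, mem_range] at *; exact ⟨a.isLt, ha.2⟩
  · intro a _ b _ h; exact Fin.val_injective h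
  · intro b hb; simp only [mem_filter, mem_range] at hb
    exact ⟨⟨b, hb.1⟩, by simp [hb.2], rfl⟩

lemma count_shift (a L : ℕ) (p : ℕ → Prop) [DecidablePred p] :
    ((Finset.Ico a (a + L)).filter p).card
      = ((Finset.range L).filter (fun y => p (a + y))).card := by
  apply Finset.card_bij' (fun w _ => w - a) (fun y _ => a + y)
  · intro w hw; simp only [mem_filter, mem_Ico, mem_range] at *
    constructor
    · omega
    · have : a + (w - a) = w := by omega
      rw [this]; exact hw.2
  · intro y hy; simp only [mem_filter, mem_Ico, mem_range] at *
    exact ⟨by omega, hy.2⟩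
  · intro w hw; simp only [mem_filter, mem_Ico] at hw; omega
  · intro y hy; omega

lemma count_block (M m : ℕ) (p : ℕ → Prop) [DecidablePred p] :
    ((Finset.range (m * M)).filter (fun w => p (w % m))).card
      = M * ((Finset.range m).filter p).card := by
  induction M with
  | zero => simp
  | succ M ih =>
    have hsplit : Finset.range (m * (M + 1))
        = Finset.range (m * M) ∪ Finset.Ico (m * M) (m * M + m) := by
      simp only [Finset.range_eq_Ico]
      rw [Finset.Ico_union_Ico_eq_Ico (by omega) (by omega)]
      congr 1
    rw [hsplit, Finset.filter_union, Finset.card_union_of_disjoint]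
    · rw [ih, count_shift]
      have he : (Finset.range m).filter (fun y => p ((m * M + y) % m))
          = (Finset.range m).filter p := by
        apply Finset.filter_congr
        intro y hy
        rw [Finset.mem_range] at hy
        rw [Nat.mul_add_mod, Nat.mod_eq_of_lt hy]
      rw [he]; ring
    · apply Finset.disjoint_filter_filter
      rw [Finset.range_eq_Ico]
      exact Finset.Ico_disjoint_Ico_consecutive 0 (m * M) (m * M + m)

lemma mod_sub_helper (q r d : ℕ) (hq : 0 < q) (hr : r < q) (hd : d < q) :
    (r + d) % q = if r + d < q then r + d else r + d - q := by
  split_ifs with h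
  · exact Nat.mod_eq_of_lt h
  · have e : r + d = q + (r + d - q) := by omega
    calc (r + d) % q = (q + (r + d - q)) % q := by rw [← e]
    _ = (r + d - q) % q := Nat.add_mod_left _ _
    _ = r + d - q := Nat.mod_eq_of_lt (by omega)

/-- the set of partners (residues at circular distance `≥ k`) of `r` has exactly `k`
elements. -/
lemma partner_card (k r : ℕ) (hk : 2 ≤ k) (hr : r < 3 * k - 1) :
    ((Finset.range (3 * k - 1)).filter (fun j => k ≤ cdm (3 * k - 1) r j)).card = k := by
  set q := 3 * k - 1 with hq
  have hq0 : 0 < q := by omega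
  have himg : (Finset.range q).filter (fun j => k ≤ cdm q r j)
      = (Finset.Ico k (2 * k)).image (fun d => (r + d) % q) := by
    ext j
    simp only [Finset.mem_filter, Finset.mem_range, Finset.mem_image, Finset.mem_Ico]
    constructor
    · rintro ⟨hj, hcd⟩
      rw [cdm_eq q r j hr hj] at hcd
      refine ⟨if r ≤ j then j - r else j + q - r, ?_, ?_⟩
      · split_ifs at hcd ⊢ <;> omega
      · rw [mod_sub_helper q r _ hq0 hr (by split_ifs at hcd ⊢ <;> omega)]
        split_ifs at hcd ⊢ <;> omega
    · rintro ⟨d, hd, rfl⟩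
      rw [mod_sub_helper q r d hq0 hr (by omega)]
      constructor
      · split_ifs <;> omega
      · rw [cdm_eq q r _ hr (by split_ifs <;> omega)]
        split_ifs <;> omega
  rw [himg, Finset.card_image_of_injOn, Nat.card_Ico]
  · omega
  · intro d hd d' hd' hdd
    simp only [Finset.coe_Ico, Set.mem_Ico] at hd hd'
    have hdd : (r + d) % q = (r + d') % q := hdd
    rw [mod_sub_helper q r d hq0 hr (by omega), mod_sub_helper q r d' hq0 hr (by omega)] at hdd
    split_ifs at hdd <;> omega

/-- number of special partners of `r`. -/
lemma spec_partner_card (k r : ℕ) (hk : 2 ≤ k) (hr : r < 3 * k - 1) :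
    (({0, k, 2 * k} : Finset ℕ).filter (fun j => k ≤ cdm (3 * k - 1) r j)).card
      = if r = k then 2 else 1 := by
  set q := 3 * k - 1 with hq
  have h0 : (k ≤ cdm q r 0) ↔ (k ≤ r ∧ r ≤ 2 * k - 1) := by
    rw [cdm_eq q r 0 hr (by omega)]
    split_ifs <;> omega
  have hk' : (k ≤ cdm q r k) ↔ (r = 0 ∨ 2 * k ≤ r) := by
    rw [cdm_eq q r k hr (by omega)]
    split_ifs <;> omega
  have h2k : (k ≤ cdm q r (2 * k)) ↔ (1 ≤ r ∧ r ≤ k) := by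
    rw [cdm_eq q r (2 * k) hr (by omega)]
    split_ifs <;> omega
  rw [Finset.card_filter]
  rw [Finset.sum_insert (by simp; omega), Finset.sum_insert (by simp; omega),
    Finset.sum_singleton]
  rw [if_congr h0 rfl rfl, if_congr hk' rfl rfl, if_congr h2k rfl rfl]
  split_ifs <;> omega

/-- number of non-special partners of `r`. -/
lemma nonspec_partner_card (k r : ℕ) (hk : 2 ≤ k) (hr : r < 3 * k - 1) :
    ((Finset.range (3 * k - 4)).filter (fun u => k ≤ cdm (3 * k - 1) r (emb k u))).card
      = k - 1 - (if r = k then 1 else 0) := by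
  set q := 3 * k - 1 with hq
  set p : ℕ → Prop := fun j => k ≤ cdm q r j with hp
  have hinj : ∀ u ∈ (Finset.range (3 * k - 4)).filter (fun u => p (emb k u)),
      ∀ v ∈ (Finset.range (3 * k - 4)).filter (fun u => p (emb k u)),
      emb k u = emb k v → u = v := by
    intro u hu v hv huv
    simp only [Finset.mem_filter, Finset.mem_range] at hu hv
    exact emb_inj k u v hk hu.1 hv.1 huv
  have h1 : ((Finset.range (3 * k - 4)).filter (fun u => p (emb k u))).card
      = (((Finset.range (3 * k - 4)).filter (fun u => p (emb k u))).image (emb k)).card :=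
    (Finset.card_image_of_injOn hinj).symm
  have h2 := Finset.filter_image (s := Finset.range (3 * k - 4)) (f := emb k) (p := p)
  rw [h1, ← h2, emb_image k hk]
  have hsdiff : (Finset.range q).filter (fun j => j ≠ 0 ∧ j ≠ k ∧ j ≠ 2 * k)
      = Finset.range q \ ({0, k, 2 * k} : Finset ℕ) := by
    ext j
    simp only [Finset.mem_filter, Finset.mem_sdiff, Finset.mem_range, Finset.mem_insert,
      Finset.mem_singleton]
    tauto
  have hsplit : ((Finset.range q \ ({0, k, 2 * k} : Finset ℕ)).filter p)
      = (Finset.range q).filter p \ (({0, k, 2 * k} : Finset ℕ).filter p) := by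
    ext j
    simp only [Finset.mem_filter, Finset.mem_sdiff, Finset.mem_insert, Finset.mem_singleton]
    tauto
  rw [hsdiff, hsplit, Finset.card_sdiff_of_subset]
  · have e1 : (Finset.range q).filter p
        = (Finset.range (3 * k - 1)).filter (fun j => k ≤ cdm (3 * k - 1) r j) := rfl
    have e2 : (({0, k, 2 * k} : Finset ℕ)).filter p
        = (({0, k, 2 * k} : Finset ℕ)).filter (fun j => k ≤ cdm (3 * k - 1) r j) := rfl
    rw [e1, e2, partner_card k r hk hr, spec_partner_card k r hk hr]
    split_ifs <;> omega
  · intro j hj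
    simp only [Finset.mem_filter, Finset.mem_insert, Finset.mem_singleton,
      Finset.mem_range] at hj ⊢
    refine ⟨by omega, hj.2⟩


def role (k b v : ℕ) : ℕ :=
  if v < (3 * k - 1) * b then v % (3 * k - 1) else emb k ((v - (3 * k - 1) * b) % (3 * k - 4))

def gad (k b v : ℕ) : ℕ :=
  if v < (3 * k - 1) * b then v / (3 * k - 1) else b + (v - (3 * k - 1) * b) / (3 * k - 4)

lemma role_lt (k b v : ℕ) (hk : 2 ≤ k) : role k b v < 3 * k - 1 := by
  unfold role
  split_ifs
  · exact Nat.mod_lt _ (by omega)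
  · exact emb_lt k _ hk (Nat.mod_lt _ (by omega))

def HG (n k b : ℕ) : SimpleGraph (Fin n) where
  Adj v w := v ≠ w ∧ k ≤ cdm (3 * k - 1) (role k b v.val) (role k b w.val)
  symm := by
    constructor
    intro v w h
    exact ⟨h.1.symm, by rw [cdm_comm]; exact h.2⟩
  loopless := ⟨fun v h => h.1 rfl⟩

def RG (n k b : ℕ) : SimpleGraph (Fin n) where
  Adj v w := (HG n k b).Adj v w ∧ gad k b v.val = gad k b w.val
  symm := by
    constructor
    intro v w h
    exact ⟨h.1.symm, h.2.symm⟩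
  loopless := ⟨fun v h => h.1.1 rfl⟩

def PG (n k b : ℕ) : SimpleGraph (Fin n) where
  Adj v w := (HG n k b).Adj v w ∧ gad k b v.val ≠ gad k b w.val
  symm := by
    constructor
    intro v w h
    exact ⟨h.1.symm, fun e => h.2 e.symm⟩
  loopless := ⟨fun v h => h.1.1 rfl⟩

instance (n k b : ℕ) : DecidableRel (HG n k b).Adj := fun v w =>
  inferInstanceAs (Decidable (v ≠ w ∧ k ≤ cdm (3 * k - 1) (role k b v.val) (role k b w.val)))

instance (n k b : ℕ) : DecidableRel (RG n k b).Adj := fun v w =>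
  inferInstanceAs (Decidable ((HG n k b).Adj v w ∧ gad k b v.val = gad k b w.val))

instance (n k b : ℕ) : DecidableRel (PG n k b).Adj := fun v w =>
  inferInstanceAs (Decidable ((HG n k b).Adj v w ∧ gad k b v.val ≠ gad k b w.val))

lemma sup_RP (n k b : ℕ) : RG n k b ⊔ PG n k b = HG n k b := by
  ext v w
  simp only [SimpleGraph.sup_adj]
  show ((HG n k b).Adj v w ∧ _) ∨ ((HG n k b).Adj v w ∧ _) ↔ _
  tauto

lemma hg_triangle_free (n k b : ℕ) (hk : 2 ≤ k) : (HG n k b).CliqueFree 3 := by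
  intro S hS
  obtain ⟨a, c, d, hac, had, hcd, rfl⟩ := Finset.card_eq_three.mp hS.2
  have h1 := hS.1
  have hadj : ∀ x ∈ ({a, c, d} : Finset (Fin n)), ∀ y ∈ ({a, c, d} : Finset (Fin n)),
      x ≠ y → (HG n k b).Adj x y := fun x hx y hy hxy => h1 hx hy hxy
  have h2 := (hadj a (by simp) c (by simp) hac).2
  have h3 := (hadj c (by simp) d (by simp) hcd).2
  have h4 := (hadj a (by simp) d (by simp) had).2
  exact no_triangle k _ _ _ hk (role_lt k b a.val hk) (role_lt k b c.val hk)
    (role_lt k b d.val hk) h2 h3 h4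

lemma fiber_bound (n k b s g : ℕ) (hk : 2 ≤ k) (hn : (3 * k - 1) * b + (3 * k - 4) * s = n)
    (S : Finset (Fin n))
    (hfib : ∀ v ∈ S, gad k b v.val = g)
    (hpair : ∀ v ∈ S, ∀ w ∈ S, v ≠ w →
      ¬ (k ≤ cdm (3 * k - 1) (role k b v.val) (role k b w.val))) :
    S.card ≤ if g < b then k else k - 1 := by
  have himg : ∀ (f : Fin n → ℕ), Set.InjOn f S →
      (∀ x ∈ S.image f, x < (if g < b then 3 * k - 1 else 3 * k - 4)) →
      (∀ x ∈ S.image f, ∀ y ∈ S.image f,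
        cdm (if g < b then 3 * k - 1 else 3 * k - 4) x y ≤ (if g < b then k else k - 1) - 1) →
      S.card ≤ if g < b then k else k - 1 := by
    intro f hinj hlt hcd
    rw [← Finset.card_image_of_injOn hinj]
    refine arc_card _ _ (by split_ifs <;> omega) (by split_ifs <;> omega) _ hlt hcd
  by_cases hg : g < b
  · -- Γ_k transversal gadget
    simp only [if_pos hg] at himg ⊢
    have hblock : ∀ v ∈ S, v.val < (3 * k - 1) * b := by
      intro v hv
      by_contra hnb
      have h1 := hfib v hv
      unfold gad at h1
      rw [if_neg hnb] at h1
      have := Nat.le_add_right b ((v.val - (3 * k - 1) * b) / (3 * k - 4))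
      omega
    have hrole : ∀ v ∈ S, role k b v.val = v.val % (3 * k - 1) := by
      intro v hv; unfold role; rw [if_pos (hblock v hv)]
    have hval : ∀ v ∈ S, v.val = (3 * k - 1) * g + v.val % (3 * k - 1) := by
      intro v hv
      have h1 := hfib v hv
      unfold gad at h1
      rw [if_pos (hblock v hv)] at h1
      have h2 := Nat.div_add_mod v.val (3 * k - 1)
      rw [h1] at h2
      omega
    apply himg (fun v => role k b v.val)
    · intro v hv w hw he
      simp only at he
      rw [hrole v hv, hrole w hw] at he
      have e1 := hval v hv
      have e2 := hval w hw
      exact Fin.val_injective (by omega)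
    · intro x hx
      obtain ⟨v, _, rfl⟩ := Finset.mem_image.mp hx
      exact role_lt k b v.val hk
    · intro x hx y hy
      obtain ⟨v, hv, rfl⟩ := Finset.mem_image.mp hx
      obtain ⟨w, hw, rfl⟩ := Finset.mem_image.mp hy
      by_cases hvw : v = w
      · subst hvw; rw [cdm_self]; omega
      · have := hpair v hv w hw hvw; omega
  · -- Γ_{k-1} transversal gadget
    simp only [if_neg hg] at himg ⊢
    have hblock : ∀ v ∈ S, ¬ (v.val < (3 * k - 1) * b) := by
      intro v hv hlt
      have h1 := hfib v hv
      unfold gad at h1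
      rw [if_pos hlt] at h1
      have : v.val / (3 * k - 1) < b := Nat.div_lt_of_lt_mul (by omega)
      omega
    have hrole : ∀ v ∈ S, role k b v.val
        = emb k ((v.val - (3 * k - 1) * b) % (3 * k - 4)) := by
      intro v hv; unfold role; rw [if_neg (hblock v hv)]
    have hval : ∀ v ∈ S, v.val = (3 * k - 1) * b + (3 * k - 4) * (g - b)
        + (v.val - (3 * k - 1) * b) % (3 * k - 4) := by
      intro v hv
      have h1 := hfib v hv
      unfold gad at h1
      rw [if_neg (hblock v hv)] at h1
      have hdiv : (v.val - (3 * k - 1) * b) / (3 * k - 4) = g - b := by omega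
      have h2 := Nat.div_add_mod (v.val - (3 * k - 1) * b) (3 * k - 4)
      rw [hdiv] at h2
      have h3 := hblock v hv
      omega
    apply himg (fun v => (v.val - (3 * k - 1) * b) % (3 * k - 4))
    · intro v hv w hw he
      simp only at he
      have e1 := hval v hv
      have e2 := hval w hw
      exact Fin.val_injective (by omega)
    · intro x hx
      obtain ⟨v, _, rfl⟩ := Finset.mem_image.mp hx
      exact Nat.mod_lt _ (by omega)
    · intro x hx y hy
      obtain ⟨v, hv, rfl⟩ := Finset.mem_image.mp hx
      obtain ⟨w, hw, rfl⟩ := Finset.mem_image.mp hy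
      by_cases hvw : v = w
      · subst hvw; rw [cdm_self]; omega
      · have hcd := hpair v hv w hw hvw
        rw [hrole v hv, hrole w hw] at hcd
        exact cdm_emb k _ _ hk (Nat.mod_lt _ (by omega)) (Nat.mod_lt _ (by omega)) (by omega)

lemma hg_adj (n k b : ℕ) (v w : Fin n) :
    (HG n k b).Adj v w ↔ (v ≠ w ∧ k ≤ cdm (3 * k - 1) (role k b v.val) (role k b w.val)) :=
  Iff.rfl

lemma range_split (n k b s : ℕ) (hn : (3 * k - 1) * b + (3 * k - 4) * s = n) :
    Finset.range n = Finset.range ((3 * k - 1) * b)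
      ∪ Finset.Ico ((3 * k - 1) * b) ((3 * k - 1) * b + (3 * k - 4) * s) := by
  rw [← hn]
  simp only [Finset.range_eq_Ico]
  rw [Finset.Ico_union_Ico_eq_Ico (by omega) (by omega)]

lemma count_split (n k b s : ℕ) (hk : 2 ≤ k) (hn : (3 * k - 1) * b + (3 * k - 4) * s = n)
    (p : ℕ → Prop) [DecidablePred p] :
    ((Finset.range n).filter (fun w => p (role k b w))).card
      = b * ((Finset.range (3 * k - 1)).filter p).card
        + s * ((Finset.range (3 * k - 4)).filter (fun u => p (emb k u))).card := by
  rw [range_split n k b s hn, Finset.filter_union, Finset.card_union_of_disjoint]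
  · congr 1
    · have e1 : (Finset.range ((3 * k - 1) * b)).filter (fun w => p (role k b w))
          = (Finset.range ((3 * k - 1) * b)).filter (fun w => p (w % (3 * k - 1))) := by
        apply Finset.filter_congr
        intro w hw
        rw [Finset.mem_range] at hw
        unfold role
        rw [if_pos hw]
      rw [e1, count_block b (3 * k - 1) p]
    · rw [count_shift]
      have e2 : (Finset.range ((3 * k - 4) * s)).filter
            (fun y => p (role k b ((3 * k - 1) * b + y)))
          = (Finset.range ((3 * k - 4) * s)).filter
            (fun y => p (emb k (y % (3 * k - 4)))) := by
        apply Finset.filter_congr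
        intro y hy
        unfold role
        rw [if_neg (by omega)]
        have e3 : (3 * k - 1) * b + y - (3 * k - 1) * b = y := by omega
        rw [e3]
      rw [e2, count_block s (3 * k - 4) (fun u => p (emb k u))]
  · apply Finset.disjoint_filter_filter
    rw [Finset.range_eq_Ico]
    exact Finset.Ico_disjoint_Ico_consecutive 0 _ _

lemma deg_H (n k b s : ℕ) (hk : 2 ≤ k) (hn : (3 * k - 1) * b + (3 * k - 4) * s = n)
    (v : Fin n) :
    (HG n k b).degree v + s * (if role k b v.val = k then 1 else 0)
      = b * k + s * (k - 1) := by
  have h0 : (HG n k b).degree v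
      = (Finset.univ.filter (fun w : Fin n => (HG n k b).Adj v w)).card := by
    rw [← SimpleGraph.neighborFinset_eq_filter]
    rfl
  have h1 : Finset.univ.filter (fun w : Fin n => (HG n k b).Adj v w)
      = Finset.univ.filter
        (fun w : Fin n => k ≤ cdm (3 * k - 1) (role k b v.val) (role k b w.val)) := by
    apply Finset.filter_congr
    intro w _
    rw [hg_adj]
    constructor
    · exact And.right
    · intro h
      refine ⟨?_, h⟩
      rintro rfl
      rw [cdm_self] at h
      omega
  rw [h0, h1, card_filter_fin n (fun x => k ≤ cdm (3 * k - 1) (role k b v.val) (role k b x)),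
    count_split n k b s hk hn (fun j => k ≤ cdm (3 * k - 1) (role k b v.val) j), partner_card k _ hk (role_lt k b v.val hk),
    nonspec_partner_card k _ hk (role_lt k b v.val hk)]
  rw [Nat.add_assoc, ← Nat.mul_add]
  congr 2
  split_ifs <;> omega

lemma cnt_role_k (n k b s : ℕ) (hk : 2 ≤ k) (hn : (3 * k - 1) * b + (3 * k - 4) * s = n) :
    (Finset.univ.filter (fun w : Fin n => role k b w.val = k)).card = b := by
  rw [card_filter_fin n (fun x => role k b x = k),
    count_split n k b s hk hn (fun j => j = k)]
  have e1 : (Finset.range (3 * k - 1)).filter (fun j => j = k) = {k} := by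
    ext j
    simp only [Finset.mem_filter, Finset.mem_range, Finset.mem_singleton]
    omega
  have e2 : (Finset.range (3 * k - 4)).filter (fun u => emb k u = k) = ∅ := by
    rw [Finset.filter_eq_empty_iff]
    intro u hu
    rw [Finset.mem_range] at hu
    exact (emb_ne k u hk hu).2.1
  rw [e1, e2]
  simp

lemma gad_fiber_le (n k b s : ℕ) (hk : 2 ≤ k) (hn : (3 * k - 1) * b + (3 * k - 4) * s = n)
    (g : ℕ) :
    (Finset.univ.filter (fun w : Fin n => gad k b w.val = g)).card ≤ 3 * k - 1 := by
  rw [card_filter_fin n (fun x => gad k b x = g)]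
  by_cases hg : g < b
  · have hsub : (Finset.range n).filter (fun x => gad k b x = g)
        ⊆ Finset.Ico ((3 * k - 1) * g) ((3 * k - 1) * g + (3 * k - 1)) := by
      intro w hw
      rw [Finset.mem_filter, Finset.mem_range] at hw
      obtain ⟨hwn, hwg⟩ := hw
      rw [Finset.mem_Ico]
      unfold gad at hwg
      by_cases hwb : w < (3 * k - 1) * b
      · rw [if_pos hwb] at hwg
        have h2 := Nat.div_add_mod w (3 * k - 1)
        rw [hwg] at h2
        have h3 := Nat.mod_lt w (show 0 < 3 * k - 1 by omega)
        omega
      · rw [if_neg hwb] at hwg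
        have := Nat.le_add_right b ((w - (3 * k - 1) * b) / (3 * k - 4))
        omega
    calc ((Finset.range n).filter (fun x => gad k b x = g)).card
        ≤ (Finset.Ico ((3 * k - 1) * g) ((3 * k - 1) * g + (3 * k - 1))).card :=
          Finset.card_le_card hsub
    _ = 3 * k - 1 := by rw [Nat.card_Ico]; omega
  · have hsub : (Finset.range n).filter (fun x => gad k b x = g)
        ⊆ Finset.Ico ((3 * k - 1) * b + (3 * k - 4) * (g - b))
          ((3 * k - 1) * b + (3 * k - 4) * (g - b) + (3 * k - 4)) := by
      intro w hw
      rw [Finset.mem_filter, Finset.mem_range] at hw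
      obtain ⟨hwn, hwg⟩ := hw
      rw [Finset.mem_Ico]
      unfold gad at hwg
      by_cases hwb : w < (3 * k - 1) * b
      · rw [if_pos hwb] at hwg
        have : w / (3 * k - 1) < b := Nat.div_lt_of_lt_mul (by omega)
        omega
      · rw [if_neg hwb] at hwg
        have hdiv : (w - (3 * k - 1) * b) / (3 * k - 4) = g - b := by omega
        have h2 := Nat.div_add_mod (w - (3 * k - 1) * b) (3 * k - 4)
        rw [hdiv] at h2
        have h3 := Nat.mod_lt (w - (3 * k - 1) * b) (show 0 < 3 * k - 4 by omega)
        omega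
    calc ((Finset.range n).filter (fun x => gad k b x = g)).card
        ≤ _ := Finset.card_le_card hsub
    _ ≤ 3 * k - 1 := by rw [Nat.card_Ico]; omega

lemma deg_P_ge (n k b s : ℕ) (hk : 2 ≤ k) (hn : (3 * k - 1) * b + (3 * k - 4) * s = n)
    (v : Fin n) :
    (HG n k b).degree v ≤ (PG n k b).degree v + (3 * k - 1) := by
  have h0 : (HG n k b).degree v
      = (Finset.univ.filter (fun w : Fin n => (HG n k b).Adj v w)).card := by
    rw [← SimpleGraph.neighborFinset_eq_filter]; rfl
  have h1 : (PG n k b).degree v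
      = (Finset.univ.filter (fun w : Fin n => (PG n k b).Adj v w)).card := by
    rw [← SimpleGraph.neighborFinset_eq_filter]; rfl
  have hsub : Finset.univ.filter (fun w : Fin n => (HG n k b).Adj v w)
      ⊆ Finset.univ.filter (fun w : Fin n => (PG n k b).Adj v w)
        ∪ Finset.univ.filter (fun w : Fin n => gad k b w.val = gad k b v.val) := by
    intro w hw
    rw [Finset.mem_filter] at hw
    rw [Finset.mem_union, Finset.mem_filter, Finset.mem_filter]
    by_cases hgad : gad k b w.val = gad k b v.val
    · exact Or.inr ⟨Finset.mem_univ _, hgad⟩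
    · exact Or.inl ⟨Finset.mem_univ _, hw.2, fun e => hgad e.symm⟩
  calc (HG n k b).degree v
      ≤ (Finset.univ.filter (fun w : Fin n => (PG n k b).Adj v w)
        ∪ Finset.univ.filter (fun w : Fin n => gad k b w.val = gad k b v.val)).card := by
        rw [h0]; exact Finset.card_le_card hsub
  _ ≤ (Finset.univ.filter (fun w : Fin n => (PG n k b).Adj v w)).card
        + (Finset.univ.filter (fun w : Fin n => gad k b w.val = gad k b v.val)).card :=
      Finset.card_union_le _ _
  _ ≤ (PG n k b).degree v + (3 * k - 1) := by
      rw [← h1]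
      exact Nat.add_le_add_left (gad_fiber_le n k b s hk hn _) _

lemma purple_count (n k b s : ℕ) (hk : 2 ≤ k) (hn : (3 * k - 1) * b + (3 * k - 4) * s = n) :
    n * (b * k + s * (k - 1)) ≤ 2 * (PG n k b).edgeFinset.card + n * (3 * k - 1) + s * b := by
  have hsum : ∑ v : Fin n, ((HG n k b).degree v + s * (if role k b v.val = k then 1 else 0))
      = n * (b * k + s * (k - 1)) := by
    rw [Finset.sum_congr rfl (fun v _ => deg_H n k b s hk hn v), Finset.sum_const,
      Finset.card_univ, Fintype.card_fin, smul_eq_mul]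
  have hsum2 : ∑ v : Fin n, s * (if role k b v.val = k then 1 else 0) = s * b := by
    rw [← Finset.mul_sum]
    congr 1
    have h := cnt_role_k n k b s hk hn
    rw [Finset.card_filter] at h
    exact h
  have hsum3 : ∑ v : Fin n, (HG n k b).degree v
      ≤ ∑ v : Fin n, ((PG n k b).degree v + (3 * k - 1)) :=
    Finset.sum_le_sum (fun v _ => deg_P_ge n k b s hk hn v)
  have hsum4 : ∑ v : Fin n, ((PG n k b).degree v + (3 * k - 1))
      = 2 * (PG n k b).edgeFinset.card + n * (3 * k - 1) := by
    rw [Finset.sum_add_distrib, SimpleGraph.sum_degrees_eq_twice_card_edges, Finset.sum_const,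
      Finset.card_univ, Fintype.card_fin, smul_eq_mul]
  have hsum5 : ∑ v : Fin n, ((HG n k b).degree v + s * (if role k b v.val = k then 1 else 0))
      = ∑ v : Fin n, (HG n k b).degree v
        + ∑ v : Fin n, s * (if role k b v.val = k then 1 else 0) :=
    Finset.sum_add_distrib
  omega

lemma rg_adj (n k b : ℕ) (v w : Fin n) :
    (RG n k b).Adj v w ↔ ((HG n k b).Adj v w ∧ gad k b v.val = gad k b w.val) := Iff.rfl

lemma pg_adj (n k b : ℕ) (v w : Fin n) :
    (PG n k b).Adj v w ↔ ((HG n k b).Adj v w ∧ gad k b v.val ≠ gad k b w.val) := Iff.rfl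

lemma rbp_sup (n k b : ℕ) : RG n k b ⊔ (HG n k b)ᶜ ⊔ PG n k b = ⊤ := by
  ext v w
  simp only [SimpleGraph.sup_adj, SimpleGraph.top_adj, SimpleGraph.compl_adj,
    rg_adj, pg_adj, hg_adj]
  tauto

lemma rbp_d1 (n k b : ℕ) : Disjoint (RG n k b) (HG n k b)ᶜ := by
  rw [disjoint_iff]
  ext v w
  simp only [SimpleGraph.inf_adj, SimpleGraph.bot_adj, SimpleGraph.compl_adj, rg_adj]
  tauto

lemma rbp_d2 (n k b : ℕ) : Disjoint (RG n k b) (PG n k b) := by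
  rw [disjoint_iff]
  ext v w
  simp only [SimpleGraph.inf_adj, SimpleGraph.bot_adj, rg_adj, pg_adj]
  tauto

lemma rbp_d3 (n k b : ℕ) : Disjoint (HG n k b)ᶜ (PG n k b) := by
  rw [disjoint_iff]
  ext v w
  simp only [SimpleGraph.inf_adj, SimpleGraph.bot_adj, SimpleGraph.compl_adj, pg_adj]
  tauto


end RTAux

set_option maxHeartbeats 1600000 in
theorem statement7 (c : ℝ) (hc1 : 1 / 3 < c) (hc2 : c < 1 / 2) :
    ∃ C : ℝ, 0 < C ∧ ∃ n₀ : ℕ, ∀ n : ℕ, n₀ ≤ n →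
      ∀ t : ℕ, t = ⌈c * (n : ℝ)⌉₊ →
      ∀ k : ℕ, (k : ℝ) * n / (3 * (k : ℝ) - 1) ≤ (t : ℝ) →
        (t : ℝ) < ((k : ℝ) - 1) * n / (3 * (k : ℝ) - 4) →
        ∃ R B P : SimpleGraph (Fin n), IsRBP R B P ∧
          IsSTFree R B P 3 (t + 1) ∧
          (1 / 2) * (k : ℝ) * ((k : ℝ) - 1) * (n : ℝ) ^ 2
            - (k : ℝ) * (3 * (k : ℝ) - 4) * (t : ℝ) * (n : ℝ)
            + (1 / 2) * (3 * (k : ℝ) - 4) * (3 * (k : ℝ) - 1) * (t : ℝ) ^ 2 - C * n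
            ≤ (P.edgeSet.ncard : ℝ) := by
  classical
  have h3c : (0:ℝ) < 3 * c - 1 := by linarith
  set K : ℝ := (4 * c + 1) / (3 * c - 1) with hKdef
  have hK0 : 0 < K := div_pos (by linarith) h3c
  refine ⟨2 * K + 1, by linarith, 4, ?_⟩
  intro n hn4 t ht k hk1 hk2
  have hn0R : (4:ℝ) ≤ n := by exact_mod_cast hn4
  have hnpos : (0:ℝ) < n := by linarith
  have hcn : (n:ℝ)/3 < c * n := by nlinarith
  have htc : c * n ≤ t := by rw [ht]; exact Nat.le_ceil _
  have htc2 : (t:ℝ) < c * n + 1 := by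
    rw [ht]; exact Nat.ceil_lt_add_one (by nlinarith)
  have hk2' : 2 ≤ k := by
    by_contra hcon
    push_neg at hcon
    interval_cases k
    · norm_num at hk2; nlinarith
    · norm_num at hk2; nlinarith
  have hkR : (2:ℝ) ≤ (k:ℝ) := by exact_mod_cast hk2'
  have h31 : (0:ℝ) < 3 * (k:ℝ) - 1 := by linarith
  have h34 : (0:ℝ) < 3 * (k:ℝ) - 4 := by linarith
  have hlowR : (k:ℝ) * n ≤ (3 * (k:ℝ) - 1) * t := by
    rw [div_le_iff₀ h31] at hk1; linarith
  have hhighR : (3 * (k:ℝ) - 4) * t < ((k:ℝ) - 1) * n := by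
    rw [lt_div_iff₀ h34] at hk2; linarith
  have ck1 : ((k - 1 : ℕ) : ℝ) = (k:ℝ) - 1 := by
    rw [Nat.cast_sub (by omega)]; norm_num
  have ck31 : ((3 * k - 1 : ℕ) : ℝ) = 3 * (k:ℝ) - 1 := by
    rw [Nat.cast_sub (by omega)]; push_cast; ring
  have ck34 : ((3 * k - 4 : ℕ) : ℝ) = 3 * (k:ℝ) - 4 := by
    rw [Nat.cast_sub (by omega)]; push_cast; ring
  have hlowN : k * n ≤ (3 * k - 1) * t := by
    have h : ((k * n : ℕ) : ℝ) ≤ (((3 * k - 1) * t : ℕ) : ℝ) := by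
      push_cast [ck31]; linarith
    exact_mod_cast h
  have hhighN : (3 * k - 4) * t < (k - 1) * n := by
    have h : (((3 * k - 4) * t : ℕ) : ℝ) < (((k - 1) * n : ℕ) : ℝ) := by
      push_cast [ck34, ck1]; linarith
    exact_mod_cast h
  set b := (k - 1) * n - (3 * k - 4) * t with hbdef
  set s := (3 * k - 1) * t - k * n with hsdef
  have hb : b + (3 * k - 4) * t = (k - 1) * n := Nat.sub_add_cancel (le_of_lt hhighN)
  have hs : s + k * n = (3 * k - 1) * t := Nat.sub_add_cancel hlowN
  have hbR : (b:ℝ) + (3 * (k:ℝ) - 4) * t = ((k:ℝ) - 1) * n := by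
    have h := congrArg (Nat.cast (R := ℝ)) hb
    push_cast [ck34, ck1] at h
    linarith
  have hsR : (s:ℝ) + (k:ℝ) * n = (3 * (k:ℝ) - 1) * t := by
    have h := congrArg (Nat.cast (R := ℝ)) hs
    push_cast [ck31] at h
    linarith
  have hnR : (3 * (k:ℝ) - 1) * b + (3 * (k:ℝ) - 4) * s = n := by
    linear_combination (3 * (k:ℝ) - 1) * hbR + (3 * (k:ℝ) - 4) * hsR
  have htR : (k:ℝ) * b + ((k:ℝ) - 1) * s = t := by
    linear_combination (k:ℝ) * hbR + ((k:ℝ) - 1) * hsR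
  have hnN : (3 * k - 1) * b + (3 * k - 4) * s = n := by
    have h : (((3 * k - 1) * b + (3 * k - 4) * s : ℕ) : ℝ) = ((n : ℕ) : ℝ) := by
      push_cast [ck31, ck34]; linarith
    exact_mod_cast h
  have htN : k * b + (k - 1) * s = t := by
    have h : ((k * b + (k - 1) * s : ℕ) : ℝ) = ((t : ℕ) : ℝ) := by
      push_cast [ck1]; linarith
    exact_mod_cast h
  refine ⟨RTAux.RG n k b, (RTAux.HG n k b)ᶜ, RTAux.PG n k b, ?_, ?_, ?_⟩
  · exact ⟨RTAux.rbp_sup n k b, RTAux.rbp_d1 n k b, RTAux.rbp_d2 n k b, RTAux.rbp_d3 n k b⟩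
  · constructor
    · rw [RTAux.sup_RP]
      exact RTAux.hg_triangle_free n k b hk2'
    · intro S hS
      have hcard := hS.2
      have hadj := hS.1
      have hgmem : ∀ v : Fin n, RTAux.gad k b v.val ∈ Finset.range (b + s) := by
        intro v
        rw [Finset.mem_range]
        unfold RTAux.gad
        by_cases hvb : v.val < (3 * k - 1) * b
        · rw [if_pos hvb]
          have : v.val / (3 * k - 1) < b := Nat.div_lt_of_lt_mul (by omega)
          omega
        · rw [if_neg hvb]
          have hvn : v.val < n := v.isLt
          have : (v.val - (3 * k - 1) * b) / (3 * k - 4) < s :=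
            Nat.div_lt_of_lt_mul (by omega)
          omega
      have key : S.card ≤ k * b + (k - 1) * s := by
        rw [Finset.card_eq_sum_card_fiberwise
          (f := fun v : Fin n => RTAux.gad k b v.val) (t := Finset.range (b + s))
          (fun v _ => hgmem v)]
        have hfb : ∀ g ∈ Finset.range (b + s),
            (S.filter (fun v => RTAux.gad k b v.val = g)).card
              ≤ (if g < b then k else k - 1) := by
          intro g _
          apply RTAux.fiber_bound n k b s g hk2' hnN
          · intro v hv
            exact (Finset.mem_filter.mp hv).2
          · intro v hv w hw hvw hcd
            have hv' := Finset.mem_filter.mp hv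
            have hw' := Finset.mem_filter.mp hw
            have hA := hadj (Finset.mem_coe.mpr hv'.1) (Finset.mem_coe.mpr hw'.1) hvw
            rw [SimpleGraph.sup_adj] at hA
            rcases hA with hB | hP
            · rw [SimpleGraph.compl_adj] at hB
              exact hB.2 ⟨hvw, hcd⟩
            · exact hP.2 (hv'.2.trans hw'.2.symm)
        calc ∑ g ∈ Finset.range (b + s), (S.filter (fun v => RTAux.gad k b v.val = g)).card
            ≤ ∑ g ∈ Finset.range (b + s), (if g < b then k else k - 1) :=
              Finset.sum_le_sum hfb
        _ = b * k + s * (k - 1) := by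
            rw [show Finset.range (b + s) = Finset.range b ∪ Finset.Ico b (b + s) by
              simp only [Finset.range_eq_Ico]
              rw [Finset.Ico_union_Ico_eq_Ico (by omega) (by omega)]]
            rw [Finset.sum_union (by
              rw [Finset.range_eq_Ico]
              exact Finset.Ico_disjoint_Ico_consecutive 0 b (b + s))]
            rw [Finset.sum_congr rfl (fun g hg => if_pos (Finset.mem_range.mp hg)),
              Finset.sum_congr rfl (fun g hg => if_neg (by
                rw [Finset.mem_Ico] at hg; omega)),
              Finset.sum_const, Finset.sum_const, Nat.card_Ico, Finset.card_range,
              smul_eq_mul, smul_eq_mul]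
            have e : b + s - b = s := by omega
            rw [e]
        _ = k * b + (k - 1) * s := by ring
      omega
  · have hcount := RTAux.purple_count n k b s hk2' hnN
    have hPE : (RTAux.PG n k b).edgeSet.ncard = (RTAux.PG n k b).edgeFinset.card := by
      rw [Set.ncard_eq_toFinset_card']
      congr 1
    rw [hPE]
    have hcountR : (n:ℝ) * ((b:ℝ) * k + (s:ℝ) * ((k:ℝ) - 1))
        ≤ 2 * ((RTAux.PG n k b).edgeFinset.card : ℝ) + (n:ℝ) * (3 * (k:ℝ) - 1)
          + (s:ℝ) * b := by
      have h := (Nat.cast_le (α := ℝ)).mpr hcount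
      push_cast [ck1, ck31] at h
      linarith
    have h1 : (k:ℝ) * (3 * (t:ℝ) - n) < 4 * t - n := by nlinarith [hhighR]
    have h2 : (k:ℝ) * ((3 * c - 1) * n) ≤ (k:ℝ) * (3 * (t:ℝ) - n) := by
      apply mul_le_mul_of_nonneg_left _ (by linarith)
      nlinarith [htc]
    have h3 : 4 * (t:ℝ) - n ≤ (4 * c + 1) * n := by nlinarith [htc2, hn0R]
    have hkK : (k:ℝ) ≤ K := by
      rw [hKdef, le_div_iff₀ h3c]
      nlinarith [h1, h2, h3, hnpos]
    have hq2C : 3 * (k:ℝ) - 1 ≤ 2 * (2 * K + 1) := by linarith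
    have hid : (1 / 2) * (k : ℝ) * ((k : ℝ) - 1) * (n : ℝ) ^ 2
          - (k : ℝ) * (3 * (k : ℝ) - 4) * (t : ℝ) * (n : ℝ)
          + (1 / 2) * (3 * (k : ℝ) - 4) * (3 * (k : ℝ) - 1) * (t : ℝ) ^ 2
        = ((n:ℝ) * ((b:ℝ) * k + (s:ℝ) * ((k:ℝ) - 1)) - (s:ℝ) * b) / 2 := by
      rw [show (n:ℝ) = (3 * (k:ℝ) - 1) * b + (3 * (k:ℝ) - 4) * s from hnR.symm,
        show (t:ℝ) = (k:ℝ) * b + ((k:ℝ) - 1) * s from htR.symm]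
      ring
    have hmul : (n:ℝ) * (3 * (k:ℝ) - 1) ≤ (n:ℝ) * (2 * (2 * K + 1)) :=
      mul_le_mul_of_nonneg_left hq2C (by linarith)
    linarith
end

section
/- There exists a real p > 0 such that for every integer s ≥ 3 there is an integer n₀ with the following property: for all n ≥ n₀ and every integer t with R⁻¹(s,n)·log₂ n ≤ t ≤ n, there exists an (s,t)-free red/blue/purple colouring R ∪ B ∪ P of K_n with |P| ≥ p · RT(s, t/log₂ n, n). -/
/-- Edges of `G` inside vertex set `S`. -/
private noncomputable def edgesIn {n : ℕ} (G : SimpleGraph (Fin n)) (S : Finset (Fin n)) :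
    Finset (Sym2 (Fin n)) :=
  @Finset.filter _ (fun ed => ed ∈ G.edgeSet) (Classical.decPred _) S.sym2

private lemma mem_edgesIn {n : ℕ} {G : SimpleGraph (Fin n)} {S : Finset (Fin n)}
    {ed : Sym2 (Fin n)} : ed ∈ edgesIn G S ↔ ed ∈ S.sym2 ∧ ed ∈ G.edgeSet := by
  unfold edgesIn
  exact @Finset.mem_filter _ _ (Classical.decPred _) _ _

private lemma edgesIn_subset {n : ℕ} {G : SimpleGraph (Fin n)} {S T : Finset (Fin n)}
    (h : S ⊆ T) : edgesIn G S ⊆ edgesIn G T := by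
  intro ed hed
  rw [mem_edgesIn] at hed ⊢
  exact ⟨Finset.sym2_mono h hed.1, hed.2⟩

private lemma nat_quad {j d a : ℕ} (h : j ≤ d) : j ^ 2 ≤ 2 * a * d + (d - a) ^ 2 := by
  rcases le_total d a with hd | hd
  · have h1 : j ^ 2 ≤ a * d := by
      calc j ^ 2 = j * j := sq j
        _ ≤ d * d := Nat.mul_le_mul h h
        _ ≤ a * d := Nat.mul_le_mul_right _ hd
    calc j ^ 2 ≤ a * d := h1
      _ ≤ 2 * a * d := by nlinarith
      _ ≤ 2 * a * d + (d - a) ^ 2 := Nat.le_add_right _ _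
  · obtain ⟨c, rfl⟩ : ∃ c, d = c + a := ⟨d - a, by omega⟩
    have h2 : c + a - a = c := by omega
    rw [h2]
    have h3 : j ^ 2 ≤ (c + a) ^ 2 := Nat.pow_le_pow_left h 2
    nlinarith

private lemma greedy_bound {n : ℕ} (G : SimpleGraph (Fin n)) (a : ℕ)
    (ha : ∀ I : Finset (Fin n), Gᶜ.IsClique (I : Set (Fin n)) → I.card ≤ a)
    (S : Finset (Fin n)) : (S.card - a) ^ 2 ≤ 2 * a * (edgesIn G S).card := by
  classical
  induction S using Finset.strongInductionOn with
  | _ S ih =>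
    by_cases hS : S.card ≤ a
    · simp [Nat.sub_eq_zero_of_le hS]
    push_neg at hS
    have hSne : S.Nonempty := Finset.card_pos.mp (by omega)
    obtain ⟨v₀, hv₀⟩ := hSne
    set F := S.powerset.filter (fun (I : Finset (Fin n)) => Gᶜ.IsClique (I : Set (Fin n))) with hF
    have hFne : F.Nonempty := ⟨∅, by simp [hF]⟩
    obtain ⟨I, hIF, hImax⟩ := F.exists_max_image (fun (I : Finset (Fin n)) => I.card) hFne
    have hIS : I ⊆ S := Finset.mem_powerset.mp (Finset.mem_filter.mp hIF).1
    have hIcl : Gᶜ.IsClique (I : Set (Fin n)) := (Finset.mem_filter.mp hIF).2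
    have hIa : I.card ≤ a := ha I hIcl
    have hIpos : 1 ≤ I.card := by
      have h1 : ({v₀} : Finset (Fin n)) ∈ F := by
        simp [hF, Finset.singleton_subset_iff, hv₀]
      simpa using hImax _ h1
    have key : ∀ v ∈ S \ I, ∃ u, u ∈ I ∧ G.Adj v u := by
      intro v hv
      by_contra hcon
      push_neg at hcon
      have hvI : v ∉ I := (Finset.mem_sdiff.mp hv).2
      have hins : Gᶜ.IsClique ((insert v I : Finset (Fin n)) : Set (Fin n)) := by
        rw [Finset.coe_insert]
        refine hIcl.insert ?_
        intro b hb hne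
        exact ⟨hne, fun hadj => hcon b (by exact_mod_cast hb) hadj⟩
      have hmem : insert v I ∈ F := by
        refine Finset.mem_filter.mpr ⟨Finset.mem_powerset.mpr ?_, hins⟩
        intro w hw
        rcases Finset.mem_insert.mp hw with rfl | hw
        · exact (Finset.mem_sdiff.mp hv).1
        · exact hIS hw
      have h2 := hImax _ hmem
      rw [Finset.card_insert_of_notMem hvI] at h2
      omega
    haveI : Nonempty (Fin n) := ⟨v₀⟩
    choose! u hu hadj using key
    set D := S \ I with hD
    set Im := D.image (fun v => s(v, u v)) with hIm
    have hinj : Set.InjOn (fun v => s(v, u v)) D := by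
      intro x hx y hy hxy
      simp only [Sym2.eq_iff] at hxy
      rcases hxy with ⟨rfl, -⟩ | ⟨h1, h2⟩
      · rfl
      · exfalso
        have hxI : x ∈ I := h1 ▸ hu y hy
        exact (Finset.mem_sdiff.mp hx).2 hxI
    have hImcard : Im.card = D.card := Finset.card_image_of_injOn hinj
    have hsub : Im ∪ edgesIn G D ⊆ edgesIn G S := by
      intro ed hed
      rcases Finset.mem_union.mp hed with hed | hed
      · obtain ⟨v, hv, rfl⟩ := Finset.mem_image.mp hed
        rw [mem_edgesIn]
        constructor
        · rw [Finset.mk_mem_sym2_iff]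
          exact ⟨(Finset.mem_sdiff.mp hv).1, hIS (hu v hv)⟩
        · exact (G.mem_edgeSet).mpr (hadj v hv)
      · exact edgesIn_subset Finset.sdiff_subset hed
    have hdisj : Disjoint Im (edgesIn G D) := by
      rw [Finset.disjoint_left]
      intro ed hed hed'
      obtain ⟨v, hv, rfl⟩ := Finset.mem_image.mp hed
      have h1 := (mem_edgesIn.mp hed').1
      rw [Finset.mk_mem_sym2_iff] at h1
      exact (Finset.mem_sdiff.mp h1.2).2 (hu v hv)
    have hcard : D.card + (edgesIn G D).card ≤ (edgesIn G S).card := by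
      have h3 := Finset.card_le_card hsub
      rwa [Finset.card_union_of_disjoint hdisj, hImcard] at h3
    have hss : D ⊂ S := Finset.sdiff_ssubset hIS (Finset.card_pos.mp hIpos)
    have hI2 := ih D hss
    have hDcard : D.card = S.card - I.card := Finset.card_sdiff_of_subset hIS
    have hj : S.card - a ≤ D.card := by omega
    calc (S.card - a) ^ 2 ≤ 2 * a * D.card + (D.card - a) ^ 2 := nat_quad hj
      _ ≤ 2 * a * D.card + 2 * a * (edgesIn G D).card := Nat.add_le_add_left hI2 _
      _ = 2 * a * (D.card + (edgesIn G D).card) := by ring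
      _ ≤ 2 * a * (edgesIn G S).card := Nat.mul_le_mul_left _ hcard

private lemma choose_ratio : ∀ (m k e : ℕ), m ≤ k → 4 * k ≤ e →
    4 ^ m * Nat.choose (e - m) (k - m) ≤ Nat.choose e k := by
  intro m
  induction m with
  | zero => intro k e _ _; simpa using le_refl _
  | succ m ihm =>
    intro k e hm he
    have hm' : m ≤ k := by omega
    have step : 4 * Nat.choose (e - m - 1) (k - m - 1) ≤ Nat.choose (e - m) (k - m) := by
      set E' := e - m with hE'
      set K' := k - m with hK'
      have hK1 : 1 ≤ K' := by omega
      have hEK : 4 * K' ≤ E' := by omega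
      have hE1 : 1 ≤ E' := by omega
      have hid : E' * Nat.choose (E' - 1) (K' - 1) = Nat.choose E' K' * K' := by
        have h0 := Nat.add_one_mul_choose_eq (E' - 1) (K' - 1)
        rw [Nat.sub_add_cancel hE1,
          Nat.sub_add_cancel hK1] at h0
        exact h0
      have h5 : K' * (4 * Nat.choose (E' - 1) (K' - 1)) ≤ K' * Nat.choose E' K' := by
        calc K' * (4 * Nat.choose (E' - 1) (K' - 1))
            = 4 * K' * Nat.choose (E' - 1) (K' - 1) := by ring
          _ ≤ E' * Nat.choose (E' - 1) (K' - 1) := Nat.mul_le_mul_right _ hEK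
          _ = Nat.choose E' K' * K' := hid
          _ = K' * Nat.choose E' K' := by ring
      exact Nat.le_of_mul_le_mul_left h5 (by omega)
    have h1 : e - (m + 1) = e - m - 1 := by omega
    have h2 : k - (m + 1) = k - m - 1 := by omega
    calc 4 ^ (m + 1) * Nat.choose (e - (m + 1)) (k - (m + 1))
        = 4 ^ m * (4 * Nat.choose (e - m - 1) (k - m - 1)) := by rw [h1, h2, pow_succ]; ring
      _ ≤ 4 ^ m * Nat.choose (e - m) (k - m) := Nat.mul_le_mul_left _ step
      _ ≤ Nat.choose e k := ihm k e hm' (by omega)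

private lemma pow8_le_factorial : ∀ t : ℕ, 20 ≤ t → 8 ^ t ≤ Nat.factorial t := by
  intro t ht
  induction t with
  | zero => omega
  | succ m ih =>
    rcases Nat.lt_or_ge m 20 with h | h
    · have hm : m = 19 := by omega
      subst hm
      norm_num [Nat.factorial]
    · have h1 := ih h
      rw [pow_succ, Nat.factorial_succ]
      calc 8 ^ m * 8 ≤ Nat.factorial m * 8 := Nat.mul_le_mul_right _ h1
        _ ≤ Nat.factorial m * (m + 1) := Nat.mul_le_mul_left _ (by omega)
        _ = (m + 1) * Nat.factorial m := by ring

private lemma exists_sparse {n t k m₀ : ℕ} (G : SimpleGraph (Fin n))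
    (hk4 : 4 * k ≤ (edgesIn G Finset.univ).card)
    (hm₀ : ∀ S : Finset (Fin n), S.card = t → m₀ ≤ (edgesIn G S).card)
    (hchoose : Nat.choose n t < 4 ^ m₀) :
    ∃ Pf : Finset (Sym2 (Fin n)), Pf ⊆ edgesIn G Finset.univ ∧ Pf.card = k ∧
      ∀ S : Finset (Fin n), S.card = t → ¬ (edgesIn G S ⊆ Pf) := by
  classical
  set E := edgesIn G Finset.univ with hE
  set e := E.card with he
  by_contra hcon
  push_neg at hcon
  set Ω := E.powersetCard k with hΩ
  have hke : k ≤ e := le_trans (by omega) hk4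
  have hΩcard : Ω.card = Nat.choose e k := Finset.card_powersetCard k E
  have hΩpos : 0 < Ω.card := hΩcard ▸ Nat.choose_pos hke
  set T := (Finset.univ : Finset (Fin n)).powersetCard t with hT
  have hTcard : T.card = Nat.choose n t := by
    rw [hT, Finset.card_powersetCard, Finset.card_univ, Fintype.card_fin]
  have cover : Ω ⊆ T.biUnion (fun S => Ω.filter (fun Pf => edgesIn G S ⊆ Pf)) := by
    intro Pf hPf
    have h1 := Finset.mem_powersetCard.mp hPf
    obtain ⟨S, hSt, hSsub⟩ := hcon Pf h1.1 h1.2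
    exact Finset.mem_biUnion.mpr ⟨S, Finset.mem_powersetCard.mpr ⟨Finset.subset_univ S, hSt⟩,
      Finset.mem_filter.mpr ⟨hPf, hSsub⟩⟩
  by_cases hm₀k : m₀ ≤ k
  · have hper : ∀ S ∈ T, (Ω.filter (fun Pf => edgesIn G S ⊆ Pf)).card
        ≤ Nat.choose (e - m₀) (k - m₀) := by
      intro S hS
      have hSt : S.card = t := (Finset.mem_powersetCard.mp hS).2
      obtain ⟨A, hAsub, hAcard⟩ := Finset.exists_subset_card_eq (hm₀ S hSt)
      have hES : edgesIn G S ⊆ E := edgesIn_subset (Finset.subset_univ S)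
      have hAE : A ⊆ E := hAsub.trans hES
      have hmaps : ∀ Pf ∈ Ω.filter (fun Pf => edgesIn G S ⊆ Pf),
          Pf \ A ∈ (E \ A).powersetCard (k - m₀) := by
        intro Pf hPf
        obtain ⟨hPfΩ, hPfsub⟩ := Finset.mem_filter.mp hPf
        obtain ⟨hPfE, hPfk⟩ := Finset.mem_powersetCard.mp hPfΩ
        have hAPf : A ⊆ Pf := hAsub.trans hPfsub
        refine Finset.mem_powersetCard.mpr ⟨Finset.sdiff_subset_sdiff hPfE (le_refl A), ?_⟩
        rw [Finset.card_sdiff_of_subset hAPf, hPfk, hAcard]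
      have hinj : ∀ P1 ∈ Ω.filter (fun Pf => edgesIn G S ⊆ Pf),
          ∀ P2 ∈ Ω.filter (fun Pf => edgesIn G S ⊆ Pf), P1 \ A = P2 \ A → P1 = P2 := by
        intro P1 h1' P2 h2' heq
        have hA1 : A ⊆ P1 := hAsub.trans (Finset.mem_filter.mp h1').2
        have hA2 : A ⊆ P2 := hAsub.trans (Finset.mem_filter.mp h2').2
        calc P1 = P1 \ A ∪ A := (Finset.sdiff_union_of_subset hA1).symm
          _ = P2 \ A ∪ A := by rw [heq]
          _ = P2 := Finset.sdiff_union_of_subset hA2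
      calc (Ω.filter (fun Pf => edgesIn G S ⊆ Pf)).card
          ≤ ((E \ A).powersetCard (k - m₀)).card :=
            Finset.card_le_card_of_injOn _ hmaps (fun P1 h1' P2 h2' => hinj P1 h1' P2 h2')
        _ = Nat.choose (e - m₀) (k - m₀) := by
            rw [Finset.card_powersetCard, Finset.card_sdiff_of_subset hAE, hAcard]
    have hle : Ω.card ≤ Nat.choose n t * Nat.choose (e - m₀) (k - m₀) := by
      calc Ω.card ≤ (T.biUnion (fun S => Ω.filter (fun Pf => edgesIn G S ⊆ Pf))).card :=
            Finset.card_le_card cover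
        _ ≤ ∑ S ∈ T, (Ω.filter (fun Pf => edgesIn G S ⊆ Pf)).card := Finset.card_biUnion_le
        _ ≤ T.card • Nat.choose (e - m₀) (k - m₀) := Finset.sum_le_card_nsmul _ _ _ hper
        _ = Nat.choose n t * Nat.choose (e - m₀) (k - m₀) := by rw [smul_eq_mul, hTcard]
    have hratio := choose_ratio m₀ k e hm₀k hk4
    have hCpos : 0 < Nat.choose (e - m₀) (k - m₀) := Nat.choose_pos (by omega)
    have h6 : Nat.choose n t * Nat.choose (e - m₀) (k - m₀)
        < 4 ^ m₀ * Nat.choose (e - m₀) (k - m₀) := by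
      exact Nat.mul_lt_mul_of_lt_of_le hchoose (le_refl _) hCpos
    rw [hΩcard] at hle
    omega
  · have hempty : ∀ S ∈ T, Ω.filter (fun Pf => edgesIn G S ⊆ Pf) = ∅ := by
      intro S hS
      rw [Finset.filter_eq_empty_iff]
      intro Pf hPf hsub
      have h1 := (Finset.mem_powersetCard.mp hPf).2
      have h2 := Finset.card_le_card hsub
      have h3 := hm₀ S (Finset.mem_powersetCard.mp hS).2
      omega
    have h0 : Ω.card ≤ 0 := by
      calc Ω.card ≤ (T.biUnion (fun S => Ω.filter (fun Pf => edgesIn G S ⊆ Pf))).card :=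
            Finset.card_le_card cover
        _ ≤ ∑ S ∈ T, (Ω.filter (fun Pf => edgesIn G S ⊆ Pf)).card := Finset.card_biUnion_le
        _ = ∑ S ∈ T, 0 := Finset.sum_congr rfl (fun S hS => by rw [hempty S hS, Finset.card_empty])
        _ = 0 := Finset.sum_const_zero
    omega

private lemma one_le_cliqueNum {n : ℕ} (hn : 0 < n) (H : SimpleGraph (Fin n)) :
    1 ≤ H.cliqueNum := by
  have hc : H.IsClique (({⟨0, hn⟩} : Finset (Fin n)) : Set (Fin n)) := by
    simp
  have h1 := SimpleGraph.IsClique.card_le_cliqueNum (G := H) (t := {⟨0, hn⟩}) (tc := hc)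
  simpa using h1

private lemma choose_lt {n t a m₀ : ℕ} (hn : 2 ^ 20 ≤ n) (ha : 1 ≤ a) (hat : a ≤ t)
    (hL : (a : ℝ) * Real.logb 2 n < t) (ht20 : 20 ≤ t)
    (hm₀ : m₀ = (t - a) ^ 2 / (2 * a)) :
    Nat.choose n t < 4 ^ m₀ := by
  have h8 : 8 ^ t ≤ Nat.factorial t := pow8_le_factorial t ht20
  have h1 : Nat.choose n t * 8 ^ t ≤ n ^ t := by
    calc Nat.choose n t * 8 ^ t ≤ Nat.choose n t * Nat.factorial t :=
          Nat.mul_le_mul_left _ h8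
      _ = Nat.factorial t * Nat.choose n t := by ring
      _ = n.descFactorial t := (Nat.descFactorial_eq_factorial_mul_choose n t).symm
      _ ≤ n ^ t := Nat.descFactorial_le_pow n t
  have h2 : n ^ t < 8 ^ t * 4 ^ m₀ := by
    have hn0 : (0 : ℝ) < n := by
      have : (0:ℕ) < n := by positivity
      exact_mod_cast this
    set L := Real.logb 2 (n : ℝ) with hLdef
    have ha0 : (0 : ℝ) < a := by exact_mod_cast ha
    have ht0 : (0 : ℝ) < t := by
      have : (0:ℕ) < t := by omega
      exact_mod_cast this
    have hmod : ((t - a) ^ 2 : ℕ) < 2 * a * (m₀ + 1) := by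
      have hlt := Nat.mod_lt ((t - a) ^ 2) (show 0 < 2 * a by omega)
      calc ((t - a) ^ 2 : ℕ) = 2 * a * ((t - a) ^ 2 / (2 * a)) + (t - a) ^ 2 % (2 * a) :=
            (Nat.div_add_mod _ _).symm
        _ < 2 * a * ((t - a) ^ 2 / (2 * a)) + 2 * a := Nat.add_lt_add_left hlt _
        _ = 2 * a * ((t - a) ^ 2 / (2 * a) + 1) := by ring
        _ = 2 * a * (m₀ + 1) := by rw [hm₀]
    have hta : ((t - a : ℕ) : ℝ) = (t : ℝ) - a := by
      exact Nat.cast_sub hat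
    have hkey : ((t : ℝ) - a) ^ 2 < 2 * a * (m₀ + 1) := by
      rw [← hta]
      exact_mod_cast hmod
    have hgoal : L * t < 3 * t + 2 * m₀ := by
      have hq1 : (a : ℝ) * (L * t) < (t : ℝ) * t := by
        calc (a : ℝ) * (L * t) = ((a : ℝ) * L) * t := by ring
          _ < (t : ℝ) * t := by exact mul_lt_mul_of_pos_right hL ht0
      have ha1 : (1 : ℝ) ≤ a := by exact_mod_cast ha
      have ht1 : (20 : ℝ) ≤ t := by exact_mod_cast ht20
      have hq2 : (t : ℝ) * t ≤ a * (3 * t + 2 * m₀) := by nlinarith [hkey]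
      have h3 := lt_of_lt_of_le hq1 hq2
      exact lt_of_mul_lt_mul_left h3 (le_of_lt ha0)
    have hreal : ((n : ℝ)) ^ t < (8 : ℝ) ^ t * (4 : ℝ) ^ m₀ := by
      have hn' : (n : ℝ) = (2 : ℝ) ^ L :=
        (Real.rpow_logb (by norm_num) (by norm_num) hn0).symm
      calc ((n : ℝ)) ^ t = ((2 : ℝ) ^ L) ^ (t : ℕ) := by rw [← hn']
        _ = (2 : ℝ) ^ (L * t) := by
            rw [← Real.rpow_natCast ((2 : ℝ) ^ L) t, ← Real.rpow_mul (by norm_num)]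
        _ < (2 : ℝ) ^ ((3 * t + 2 * m₀ : ℕ) : ℝ) := by
            apply (Real.rpow_lt_rpow_left_iff (by norm_num : (1:ℝ) < 2)).mpr
            push_cast
            linarith [hgoal]
        _ = (2 : ℝ) ^ (3 * t + 2 * m₀ : ℕ) := Real.rpow_natCast 2 _
        _ = (8 : ℝ) ^ t * (4 : ℝ) ^ m₀ := by
            rw [pow_add, pow_mul, pow_mul]
            norm_num
    have := hreal
    push_cast at this
    exact_mod_cast this
  have h3 : Nat.choose n t * 8 ^ t < 4 ^ m₀ * 8 ^ t := by
    calc Nat.choose n t * 8 ^ t ≤ n ^ t := h1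
      _ < 8 ^ t * 4 ^ m₀ := h2
      _ = 4 ^ m₀ * 8 ^ t := by ring
  exact Nat.lt_of_mul_lt_mul_right h3

theorem statement15 :
    ∃ p : ℝ, 0 < p ∧ ∀ s : ℕ, 3 ≤ s → ∃ n₀ : ℕ, ∀ n : ℕ, n₀ ≤ n →
      ∀ t : ℕ, (invRamsey s n : ℝ) * Real.logb 2 (n : ℝ) ≤ (t : ℝ) → t ≤ n →
      ∃ R B P : SimpleGraph (Fin n), IsRBP R B P ∧ IsSTFree R B P s t ∧
        p * (RT s ((t : ℝ) / Real.logb 2 (n : ℝ)) n : ℝ) ≤ (P.edgeSet.ncard : ℝ) := by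
  classical
  refine ⟨1/8, by norm_num, ?_⟩
  intro s hs
  refine ⟨2 ^ 20, ?_⟩
  intro n hn t ht htn
  have hn0 : 0 < n := lt_of_lt_of_le (by norm_num) hn
  have hn0R : (0 : ℝ) < n := by exact_mod_cast hn0
  set L := Real.logb 2 (n : ℝ) with hLdef
  have hL20 : (20 : ℝ) ≤ L := by
    have h1 : ((2 : ℝ)) ^ (20 : ℕ) ≤ (n : ℝ) := by exact_mod_cast hn
    have h2 : Real.logb 2 ((2 : ℝ) ^ (20 : ℕ)) ≤ L :=
      Real.logb_le_logb_of_le (by norm_num) (by positivity) h1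
    rwa [Real.logb_pow, Real.logb_self_eq_one (by norm_num), mul_one] at h2
  have hL0 : (0 : ℝ) < L := by linarith
  set M := {m | ∃ G : SimpleGraph (Fin n), G.CliqueFree s ∧
    (indepNumber G : ℝ) < (t : ℝ) / Real.logb 2 (n : ℝ) ∧ G.edgeSet.ncard = m} with hM
  have hRTdef : RT s ((t : ℝ) / Real.logb 2 (n : ℝ)) n = sSup M := rfl
  by_cases hMne : M.Nonempty
  · -- main case: extremal graph exists
    have hbdd : BddAbove M := by
      refine ⟨Nat.card (Sym2 (Fin n)), ?_⟩
      rintro m ⟨G, -, -, hGe⟩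
      rw [← hGe]
      calc G.edgeSet.ncard ≤ (Set.univ : Set (Sym2 (Fin n))).ncard :=
            Set.ncard_le_ncard (Set.subset_univ _) Set.finite_univ
        _ = Nat.card (Sym2 (Fin n)) := Set.ncard_univ _
    obtain ⟨G, hGfree, hGα, hGe⟩ := Nat.sSup_mem hMne hbdd
    set a := indepNumber G with haDef
    have ha1 : 1 ≤ a := one_le_cliqueNum hn0 Gᶜ
    have haL : (a : ℝ) * L < t := (lt_div_iff₀ hL0).mp hGα
    have h20a : 20 * a < t := by
      have h1 : ((20 * a : ℕ) : ℝ) < (t : ℝ) := by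
        push_cast
        calc (20 : ℝ) * a = (a : ℝ) * 20 := by ring
          _ ≤ (a : ℝ) * L := by
              apply mul_le_mul_of_nonneg_left hL20 (by positivity)
          _ < t := haL
      exact_mod_cast h1
    have hat : a ≤ t := by omega
    have ht20 : 20 ≤ t := by omega
    set m₀ := (t - a) ^ 2 / (2 * a) with hm₀
    have hind : ∀ I : Finset (Fin n), Gᶜ.IsClique (I : Set (Fin n)) → I.card ≤ a := by
      intro I hI
      exact SimpleGraph.IsClique.card_le_cliqueNum (tc := hI)
    have hedge : ∀ S : Finset (Fin n), S.card = t → m₀ ≤ (edgesIn G S).card := by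
      intro S hSt
      have h1 := greedy_bound G a hind S
      rw [hSt] at h1
      rw [hm₀]
      calc (t - a) ^ 2 / (2 * a) ≤ 2 * a * (edgesIn G S).card / (2 * a) :=
            Nat.div_le_div_right h1
        _ = (edgesIn G S).card := Nat.mul_div_cancel_left _ (by omega)
    set E := edgesIn G Finset.univ with hE
    have hecoe : (E : Set (Sym2 (Fin n))) = G.edgeSet := by
      ext ed
      simp only [Finset.mem_coe, hE, mem_edgesIn]
      constructor
      · exact fun h => h.2
      · intro h
        refine ⟨?_, h⟩
        rw [Finset.mem_sym2_iff]
        intro v _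
        exact Finset.mem_univ v
    set e := E.card with he
    have hecard : G.edgeSet.ncard = e := by
      rw [← hecoe, Set.ncard_coe_finset]
    have hm₀4 : 4 ≤ m₀ := by
      rw [hm₀, Nat.le_div_iff_mul_le (by omega : 0 < 2 * a)]
      have h1 : 19 * a ≤ t - a := by omega
      calc 4 * (2 * a) = 8 * a := by ring
        _ ≤ 361 * (a * a) := by nlinarith
        _ = (19 * a) * (19 * a) := by ring
        _ ≤ (t - a) * (t - a) := Nat.mul_le_mul h1 h1
        _ = (t - a) ^ 2 := (sq _).symm
    have he4 : 4 ≤ e := by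
      have huniv : t ≤ (Finset.univ : Finset (Fin n)).card := by
        rw [Finset.card_univ, Fintype.card_fin]; exact htn
      obtain ⟨S₀, -, hS₀⟩ := Finset.exists_subset_card_eq huniv
      have h1 := hedge S₀ hS₀
      have h2 : (edgesIn G S₀).card ≤ e :=
        Finset.card_le_card (edgesIn_subset (Finset.subset_univ S₀))
      omega
    set k := e / 4 with hk
    have hk4 : 4 * k ≤ e := by omega
    have hchoose : Nat.choose n t < 4 ^ m₀ := choose_lt hn ha1 hat haL ht20 hm₀
    obtain ⟨Pf, hPfE, hPfk, hPfgood⟩ := exists_sparse G hk4 hedge hchoose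
    set Pg := SimpleGraph.fromEdgeSet (Pf : Set (Sym2 (Fin n))) with hPg
    have hPset : (Pf : Set (Sym2 (Fin n))) ⊆ G.edgeSet := by
      rw [← hecoe]
      exact_mod_cast hPfE
    have hPle : Pg ≤ G := by
      calc Pg ≤ SimpleGraph.fromEdgeSet G.edgeSet := SimpleGraph.fromEdgeSet_mono hPset
        _ = G := SimpleGraph.fromEdgeSet_edgeSet G
    have hRP : (G \ Pg) ⊔ Pg = G := sdiff_sup_cancel hPle
    refine ⟨G \ Pg, Gᶜ, Pg, ⟨?_, ?_, ?_, ?_⟩, ⟨?_, ?_⟩, ?_⟩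
    · calc (G \ Pg) ⊔ Gᶜ ⊔ Pg = (G \ Pg) ⊔ Pg ⊔ Gᶜ := sup_right_comm _ _ _
        _ = G ⊔ Gᶜ := by rw [hRP]
        _ = ⊤ := sup_compl_eq_top
    · exact disjoint_compl_right.mono_left sdiff_le
    · exact disjoint_sdiff_self_left
    · exact disjoint_compl_left.mono_right hPle
    · rw [hRP]; exact hGfree
    · intro K hK
      refine hPfgood K hK.2 ?_
      intro ed hed
      obtain ⟨hsym, hedge'⟩ := mem_edgesIn.mp hed
      revert hsym hedge'
      refine Sym2.ind (fun x y => ?_) ed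
      intro hsym hedge'
      rw [Finset.mk_mem_sym2_iff] at hsym
      have hadj : G.Adj x y := (G.mem_edgeSet).mp hedge'
      have hne : x ≠ y := hadj.ne
      have h2 : (Gᶜ ⊔ Pg).Adj x y :=
        hK.1 (Finset.mem_coe.mpr hsym.1) (Finset.mem_coe.mpr hsym.2) hne
      rcases (SimpleGraph.sup_adj _ _ _ _).mp h2 with h2 | h2
      · exact absurd hadj h2.2
      · exact Finset.mem_coe.mp ((SimpleGraph.fromEdgeSet_adj _).mp h2).1
    · have hPedge : Pg.edgeSet = (Pf : Set (Sym2 (Fin n))) := by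
        rw [hPg, SimpleGraph.edgeSet_fromEdgeSet]
        ext ed
        simp only [Set.mem_diff, Set.mem_setOf_eq]
        constructor
        · exact fun h => h.1
        · intro h
          exact ⟨h, G.not_isDiag_of_mem_edgeSet (hPset h)⟩
      have hPcard : Pg.edgeSet.ncard = k := by
        rw [hPedge, Set.ncard_coe_finset, hPfk]
      have hRTe : sSup M = e := by rw [← hGe, hecard]
      rw [hPcard, hRTdef, hRTe]
      have h1 : (e : ℝ) ≤ 8 * k := by
        have h2 : e ≤ 8 * k := by omega
        exact_mod_cast h2
      linarith
  · -- RT set empty: RT = 0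
    rw [Set.not_nonempty_iff_eq_empty] at hMne
    have hsup0 : sSup (∅ : Set ℕ) = 0 := by simp
    have hRT0 : RT s ((t : ℝ) / Real.logb 2 (n : ℝ)) n = 0 := by
      rw [hRTdef, hMne, hsup0]
    have hinvne : {a | ∃ W : SimpleGraph (Fin n), W.CliqueFree s ∧ indepNumber W = a}.Nonempty :=
      ⟨indepNumber (⊥ : SimpleGraph (Fin n)), ⊥, SimpleGraph.cliqueFree_bot (by omega), rfl⟩
    obtain ⟨W, hWfree, hWa⟩ := Nat.sInf_mem hinvne
    have ha1 : 1 ≤ indepNumber W := one_le_cliqueNum hn0 Wᶜ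
    have h0 : invRamsey s n = indepNumber W := hWa.symm
    have hawL : ((indepNumber W : ℕ) : ℝ) * L ≤ t := by
      rw [← h0]
      exact ht
    have hta : indepNumber W < t := by
      have haw0 : (1 : ℝ) ≤ (indepNumber W : ℝ) := by exact_mod_cast ha1
      have h3 : ((indepNumber W : ℕ) : ℝ) < t := by nlinarith [hawL, hL20, haw0]
      exact_mod_cast h3
    refine ⟨W, Wᶜ, ⊥, ⟨?_, ?_, ?_, ?_⟩, ⟨?_, ?_⟩, ?_⟩
    · rw [sup_bot_eq, sup_compl_eq_top]
    · exact disjoint_compl_right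
    · exact disjoint_bot_right
    · exact disjoint_bot_right
    · rw [sup_bot_eq]; exact hWfree
    · rw [sup_bot_eq]
      intro K hK
      have h2 := SimpleGraph.IsClique.card_le_cliqueNum (tc := hK.1)
      rw [hK.2] at h2
      have : t ≤ indepNumber W := h2
      omega
    · rw [hRT0]
      simp
end
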